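/- arXiv:1705.01587 — 7 statements merged into one kernel-verified Lean document; each statement's English description precedes it below -/
import Mathlib

section
/- Let E be a Banach lattice and let P be a positive projection on E, i.e. a bounded linear operator with P ∘ P = P and Px ≥ 0 whenever x ≥ 0. Then: (1) for every x in the range of P, the element P|x| belongs to the range of P and is the least element of the set {z ∈ range(P) : z ≥ x and z ≥ −x} (so P|x| is the modulus of x within range(P), which is therefore a vector lattice in the induced order); (2) for every x ∈ range(P) one has ‖x‖ ≤ ‖P|x|‖ ≤ ‖P‖·‖x‖, so x ↦ ‖P|x|‖ defines a norm on range(P) equivalent to the restriction of ‖·‖; (3) if y ≥ 0 is a quasi-interior point of the positive cone of E (i.e. the set {x ∈ E : ∃ c ≥ 0, |x| ≤ c·y} is norm-dense in E), then Py is a quasi-interior point of the positive cone of range(P), i.e. the set {x ∈ range(P) : ∃ c ≥ 0, P|x| ≤ c·Py} is dense in range(P). -/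
/-- Range of a positive projection on a Banach lattice: `P|x|` is the modulus of `x`
within the range of `P`, the norm `x ↦ ‖P|x|‖` is equivalent to the original norm on
the range, and the image of a quasi-interior point of the positive cone is a
quasi-interior point of the positive cone of the range. -/
theorem stmt_2
    {E : Type*} [NormedAddCommGroup E] [Lattice E] [HasSolidNorm E] [IsOrderedAddMonoid E] [NormedSpace ℝ E] [CompleteSpace E]
    (P : E →L[ℝ] E)
    (h_proj : ∀ x : E, P (P x) = P x)
    (h_pos : ∀ x : E, 0 ≤ x → 0 ≤ P x) :
    (∀ x ∈ Set.range P,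
        P |x| ∈ Set.range P ∧
        IsLeast {z : E | z ∈ Set.range P ∧ x ≤ z ∧ -x ≤ z} (P |x|)) ∧
    (∀ x ∈ Set.range P, ‖x‖ ≤ ‖P |x|‖ ∧ ‖P |x|‖ ≤ ‖P‖ * ‖x‖) ∧
    (∀ y : E, 0 ≤ y →
        Dense {x : E | ∃ c : ℝ, 0 ≤ c ∧ |x| ≤ c • y} →
        Set.range P ⊆
          closure {x : E | x ∈ Set.range P ∧ ∃ c : ℝ, 0 ≤ c ∧ P |x| ≤ c • P y}) := by
  have hmono : ∀ a b : E, a ≤ b → P a ≤ P b := by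
    intro a b hab
    have h := h_pos (b - a) (sub_nonneg.mpr hab)
    rw [map_sub] at h
    exact sub_nonneg.mp h
  have hfix : ∀ x ∈ Set.range P, P x = x := by
    rintro x ⟨u, rfl⟩; exact h_proj u
  have hleast : ∀ x ∈ Set.range P,
      IsLeast {z : E | z ∈ Set.range P ∧ x ≤ z ∧ -x ≤ z} (P |x|) := by
    intro x hx
    refine ⟨⟨⟨|x|, rfl⟩, ?_, ?_⟩, ?_⟩
    · have := hmono x |x| (le_abs_self x)
      rwa [hfix x hx] at this
    · have := hmono (-x) |x| (neg_le_abs x)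
      rwa [map_neg, hfix x hx] at this
    · rintro z ⟨hz, hxz, hnz⟩
      have habs : |x| ≤ z := abs_le'.mpr ⟨hxz, hnz⟩
      have := hmono |x| z habs
      rwa [hfix z hz] at this
  refine ⟨fun x hx => ⟨⟨|x|, rfl⟩, hleast x hx⟩, ?_, ?_⟩
  · intro x hx
    have h1 : |x| ≤ P |x| :=
      abs_le'.mpr ⟨(hleast x hx).1.2.1, (hleast x hx).1.2.2⟩
    constructor
    · have hpos : 0 ≤ P |x| := h_pos |x| (abs_nonneg x)
      exact HasSolidNorm.solid (by rwa [abs_of_nonneg hpos])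
    · calc ‖P |x|‖ ≤ ‖P‖ * ‖|x|‖ := P.le_opNorm _
        _ = ‖P‖ * ‖x‖ := by rw [norm_abs_eq_norm]
  · intro y hy hdense
    rintro w ⟨v, rfl⟩
    rw [Metric.mem_closure_iff]
    intro ε hε
    have hεP : 0 < ε / (‖P‖ + 1) := div_pos hε (by positivity)
    obtain ⟨u, hu, hdu⟩ := Metric.mem_closure_iff.mp (hdense.closure_eq ▸
      Set.mem_univ (P v) : P v ∈ closure {x : E | ∃ c : ℝ, 0 ≤ c ∧ |x| ≤ c • y})
      _ hεP
    obtain ⟨c, hc, hcu⟩ := hu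
    refine ⟨P u, ⟨⟨u, rfl⟩, c, hc, ?_⟩, ?_⟩
    · have h1 : |P u| ≤ P |u| :=
        abs_le'.mpr ⟨hmono _ _ (le_abs_self u),
          (by rw [← map_neg]; exact hmono _ _ (neg_le_abs u))⟩
      calc P |P u| ≤ P (P |u|) := hmono _ _ h1
        _ = P |u| := h_proj _
        _ ≤ P (c • y) := hmono _ _ hcu
        _ = c • P y := by rw [map_smul]
    · have hd0 : 0 ≤ dist (P v) u := dist_nonneg
      have h2 : dist (P v) u * (‖P‖ + 1) < ε :=
        (lt_div_iff₀ (by positivity)).mp hdu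
      have h0 : (0:ℝ) ≤ ‖P‖ := norm_nonneg _
      calc dist (P v) (P u) = ‖P (P v - u)‖ := by
            rw [dist_eq_norm, map_sub, h_proj]
        _ ≤ ‖P‖ * ‖P v - u‖ := P.le_opNorm _
        _ = ‖P‖ * dist (P v) u := by rw [dist_eq_norm]
        _ < ε := by nlinarith
end

section
/- Let G be a commutative additive group and S ⊆ G a nonempty subsemigroup (closed under addition) whose generated subgroup is all of G. Let E be a Banach lattice and let (T_t)_{t∈S} be a family of positive bounded linear operators on E with T_{t+s} = T_t ∘ T_s for all t,s ∈ S and sup_{t∈S} ‖T_t‖ < ∞, such that for every x ∈ E the orbit {T_t x : t ∈ S} is relatively compact in the weak topology σ(E, E′). Then there exists a positive projection P on E (bounded linear, P∘P = P, positive) such that P ∘ T_t = T_t ∘ P for all t ∈ S, Px = x for every x ∈ E satisfying T_t x = x for all t ∈ S, and: (a) there exists a family (S_g)_{g∈G} of bounded linear operators on F := range(P), each positive with respect to the order induced from E and each bijective, with S_{g+h} = S_g ∘ S_h for all g,h ∈ G, sup_{g∈G} ‖S_g‖ < ∞, and S_t x = T_t x for every t ∈ S and x ∈ F; (b) for every x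 ∈ E with Px = 0, the vector 0 belongs to the closure of {T_t x : t ∈ S} in the weak topology σ(E, E′). -/
open ContinuousLinearMapWOT Filter Topology Set

section JdLGAux

/-- the inclusion of continuous linear maps into the WOT type copy, as a linear equivalence -/
noncomputable def ContinuousLinearMap.toWOT (𝕜 : Type*) [NormedField 𝕜] (E F : Type*)
    [NormedAddCommGroup E] [NormedSpace 𝕜 E] [NormedAddCommGroup F] [NormedSpace 𝕜 F] :
    (E →L[𝕜] F) ≃ₗ[𝕜] (E →WOT[𝕜] F) :=
  (ContinuousLinearMapWOT.linearEquiv 𝕜).symm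

variable {E : Type*} [NormedAddCommGroup E] [Lattice E] [HasSolidNorm E] [IsOrderedAddMonoid E] [NormedSpace ℝ E]

noncomputable instance jdlg_wkT2 : T2Space (WeakSpace ℝ E) :=
  (WeakBilin.isEmbedding (B := (topDualPairing ℝ E).flip)
    (separatingDual_iff_injective.mp inferInstance)).t2Space

noncomputable instance jdlg_wkSMul : ContinuousSMul ℝ (WeakSpace ℝ E) :=
  inferInstanceAs (ContinuousSMul ℝ (WeakBilin (topDualPairing ℝ E).flip))

/-- multiplication (composition) on the WOT type copy -/
noncomputable def jdlgMul (A B : E →WOT[ℝ] E) : E →WOT[ℝ] E :=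
  (ContinuousLinearMap.toWOT ℝ E E)
    (((ContinuousLinearMap.toWOT ℝ E E).symm A).comp ((ContinuousLinearMap.toWOT ℝ E E).symm B))

lemma jdlgMul_apply (A B : E →WOT[ℝ] E) (x : E) : jdlgMul A B x = A (B x) := rfl

lemma jdlgMul_assoc (A B C : E →WOT[ℝ] E) :
    jdlgMul (jdlgMul A B) C = jdlgMul A (jdlgMul B C) :=
  ContinuousLinearMapWOT.ext fun _ => rfl

lemma continuous_jdlgMul_left (A : E →WOT[ℝ] E) : Continuous (fun B => jdlgMul A B) := by
  refine continuous_of_dual_apply_continuous fun x y => ?_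
  have := continuous_dual_apply (σ := RingHom.id ℝ) (E := E) (F := E) x
    (y.comp ((ContinuousLinearMap.toWOT ℝ E E).symm A))
  exact this

lemma continuous_jdlgMul_right (B : E →WOT[ℝ] E) : Continuous (fun A => jdlgMul A B) := by
  refine continuous_of_dual_apply_continuous fun x y => ?_
  have := continuous_dual_apply (σ := RingHom.id ℝ) (E := E) (F := E) (B x) y
  simpa [jdlgMul_apply] using this

private lemma jdlg_disj_nsmul {a b : E} (ha : 0 ≤ a) (hb : 0 ≤ b) (h : a ⊓ b = 0) (n : ℕ) :
    (n • a) ⊓ b = 0 := by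
  induction n with
  | zero => simpa using hb
  | succ n ih =>
    have h1 : ((n + 1) • a) ⊓ b ≤ n • a := by
      have hna : 0 ≤ n • a := nsmul_nonneg ha n
      have : ((n + 1) • a) ⊓ b ≤ (n • a + a) ⊓ (n • a + b) := by
        refine le_inf ?_ ?_
        · rw [succ_nsmul]; exact inf_le_left
        · exact le_trans inf_le_right (le_add_of_nonneg_left hna)
      rw [← add_inf, h, add_zero] at this
      exact this
    have h2 : ((n + 1) • a) ⊓ b ≤ (n • a) ⊓ b := le_inf h1 inf_le_right
    have h3 : 0 ≤ ((n + 1) • a) ⊓ b :=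
      le_inf (nsmul_nonneg ha (n + 1)) hb
    exact le_antisymm (h2.trans_eq ih) h3

private lemma jdlg_nonneg_of_nsmul_nonneg {y : E} {n : ℕ} (hn : n ≠ 0) (h : 0 ≤ n • y) :
    0 ≤ y := by
  have hd : y⁺ ⊓ y⁻ = 0 := posPart_inf_negPart_eq_zero y
  have hd1 : (n • y⁺) ⊓ y⁻ = 0 := jdlg_disj_nsmul (posPart_nonneg y) (negPart_nonneg y) hd n
  have hd2 : (n • y⁻) ⊓ (n • y⁺) = 0 := by
    have := jdlg_disj_nsmul (negPart_nonneg y) (nsmul_nonneg (posPart_nonneg y) n)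
      (by rw [inf_comm]; exact hd1) n
    exact this
  have hy : n • y = n • y⁺ - n • y⁻ := by
    rw [← smul_sub, posPart_sub_negPart]
  have hle : n • y⁻ ≤ n • y⁺ := by
    rwa [hy, sub_nonneg] at h
  have hzero : n • y⁻ = 0 := by
    rw [← hd2]; exact (inf_eq_left.mpr hle).symm
  have : y⁻ ≤ n • y⁻ := by
    obtain ⟨m, rfl⟩ := Nat.exists_eq_succ_of_ne_zero hn
    rw [succ_nsmul]
    exact le_add_of_nonneg_left (nsmul_nonneg (negPart_nonneg y) m)
  have hyneg : y⁻ = 0 := le_antisymm (this.trans_eq hzero) (negPart_nonneg y)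
  have := posPart_sub_negPart y
  rw [hyneg, sub_zero] at this
  rw [← this]
  exact posPart_nonneg y

private lemma jdlg_real_smul_nonneg {c : ℝ} (hc : 0 ≤ c) {x : E} (hx : 0 ≤ x) : 0 ≤ c • x := by
  have hrat : ∀ q : ℚ, 0 ≤ q → 0 ≤ (q : ℝ) • x := by
    intro q hq
    have hden : (q.den : ℝ) • ((q : ℝ) • x) = (q.num : ℝ) • x := by
      rw [smul_smul]
      congr 1
      exact_mod_cast Rat.den_mul_eq_num q
    have hnum : 0 ≤ (q.num : ℝ) • x := by
      lift q.num to ℕ using (Rat.num_nonneg.mpr hq) with m hm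
      rw [Int.cast_natCast, Nat.cast_smul_eq_nsmul]
      exact nsmul_nonneg hx m
    have : 0 ≤ q.den • ((q : ℝ) • x) := by
      rw [Nat.cast_smul_eq_nsmul] at hden
      rw [hden]; exact hnum
    exact jdlg_nonneg_of_nsmul_nonneg q.den_nz this
  have hseq : ∀ n : ℕ, ∃ q : ℚ, c < q ∧ (q : ℝ) < c + 1 / (n + 1) := by
    intro n
    refine exists_rat_btwn (lt_add_of_pos_right c ?_)
    positivity
  choose q hq1 hq2 using hseq
  have htend : Filter.Tendsto (fun n : ℕ => ((q n : ℝ))) Filter.atTop (nhds c) := by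
    have h1 : Filter.Tendsto (fun n : ℕ => c + 1 / ((n : ℝ) + 1)) Filter.atTop (nhds (c + 0)) :=
      Filter.Tendsto.const_add c (tendsto_one_div_add_atTop_nhds_zero_nat)
    rw [add_zero] at h1
    exact tendsto_of_tendsto_of_tendsto_of_le_of_le tendsto_const_nhds h1
      (fun n => (hq1 n).le) (fun n => (hq2 n).le)
  have htend2 : Filter.Tendsto (fun n : ℕ => ((q n : ℝ)) • x) Filter.atTop (nhds (c • x)) :=
    htend.smul tendsto_const_nhds
  refine isClosed_nonneg.mem_of_tendsto htend2 (Filter.Eventually.of_forall fun n => ?_)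
  exact hrat (q n) (by exact_mod_cast (hc.trans (hq1 n).le))

private lemma jdlg_cone_convex : Convex ℝ {z : E | 0 ≤ z} := by
  intro a ha b hb p r hp hr _
  exact add_nonneg (jdlg_real_smul_nonneg hp ha) (jdlg_real_smul_nonneg hr hb)

private lemma jdlg_group_helper {A : Type*} [CommGroup A] (a b c d : A) :
    (a * b) * (c * d)⁻¹ = (a * c⁻¹) * (b * d⁻¹) := by
  rw [mul_inv]
  exact mul_mul_mul_comm a b c⁻¹ d⁻¹

variable {ι : Type*}

lemma jdlg_orbit_mem (T : ι → E →L[ℝ] E) {A : E →WOT[ℝ] E}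
    (hA : A ∈ closure (Set.range fun t => ContinuousLinearMap.toWOT ℝ E E (T t))) (x : E) :
    toWeakSpace ℝ E (A x) ∈ closure (toWeakSpace ℝ E '' {z : E | ∃ t, z = T t x}) := by
  have hcont : Continuous (fun B : E →WOT[ℝ] E => toWeakSpace ℝ E (B x)) := by
    refine WeakBilin.continuous_of_continuous_eval _ fun y => ?_
    exact continuous_dual_apply x y
  have h1 := image_closure_subset_closure_image (s := Set.range fun t =>
    ContinuousLinearMap.toWOT ℝ E E (T t)) hcont (Set.mem_image_of_mem _ hA)
  refine closure_mono ?_ h1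
  rintro - ⟨-, ⟨t, rfl⟩, rfl⟩
  exact Set.mem_image_of_mem _ ⟨t, rfl⟩

lemma jdlg_norm_bound (T : ι → E →L[ℝ] E) {M : ℝ} (hM : ∀ t, ‖T t‖ ≤ M) {x y : E}
    (hy : toWeakSpace ℝ E y ∈ closure (toWeakSpace ℝ E '' {z : E | ∃ t, z = T t x})) :
    ‖y‖ ≤ M * ‖x‖ := by
  rcases isEmpty_or_nonempty ι with hι | hι
  · rw [show {z : E | ∃ t, z = T t x} = ∅ from Set.eq_empty_of_forall_notMem
      (by rintro z ⟨t, -⟩; exact hι.false t)] at hy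
    simp at hy
  have hMp : 0 ≤ M := le_trans (norm_nonneg _) (hM hι.some)
  refine NormedSpace.norm_le_dual_bound ℝ y (by positivity) fun f => ?_
  have hC : IsClosed {z : WeakSpace ℝ E | ‖(topDualPairing ℝ E).flip z f‖ ≤ M * ‖x‖ * ‖f‖} := by
    refine isClosed_le (Continuous.norm ?_) continuous_const
    exact WeakBilin.eval_continuous _ f
  have hsub : toWeakSpace ℝ E '' {z : E | ∃ t, z = T t x} ⊆
      {z : WeakSpace ℝ E | ‖(topDualPairing ℝ E).flip z f‖ ≤ M * ‖x‖ * ‖f‖} := by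
    rintro - ⟨-, ⟨t, rfl⟩, rfl⟩
    have h1 : ‖f (T t x)‖ ≤ ‖f‖ * (‖T t‖ * ‖x‖) :=
      le_trans (f.le_opNorm _) (by gcongr; exact (T t).le_opNorm x)
    have h2 : ‖f‖ * (‖T t‖ * ‖x‖) ≤ M * ‖x‖ * ‖f‖ := by
      have h3 : ‖T t‖ * ‖x‖ ≤ M * ‖x‖ := by gcongr; exact hM t
      calc ‖f‖ * (‖T t‖ * ‖x‖) ≤ ‖f‖ * (M * ‖x‖) := by gcongr
        _ = M * ‖x‖ * ‖f‖ := by ring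
    exact le_trans h1 h2
  have := closure_minimal hsub hC hy
  exact this

lemma jdlg_pos_closure (T : ι → E →L[ℝ] E) (hpos : ∀ (t : ι) (x : E), 0 ≤ x → 0 ≤ T t x)
    {x y : E} (hx : 0 ≤ x)
    (hy : toWeakSpace ℝ E y ∈ closure (toWeakSpace ℝ E '' {z : E | ∃ t, z = T t x})) :
    0 ≤ y := by
  have hsub : toWeakSpace ℝ E '' {z : E | ∃ t, z = T t x} ⊆
      toWeakSpace ℝ E '' {z : E | 0 ≤ z} := by
    rintro - ⟨-, ⟨t, rfl⟩, rfl⟩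
    exact Set.mem_image_of_mem _ (hpos t x hx)
  have hcl : closure (toWeakSpace ℝ E '' {z : E | 0 ≤ z}) =
      toWeakSpace ℝ E '' {z : E | 0 ≤ z} := by
    rw [← Convex.toWeakSpace_closure ℝ jdlg_cone_convex, isClosed_nonneg.closure_eq]
  have h2 := closure_mono hsub hy
  rw [hcl] at h2
  obtain ⟨z, hz, hzy⟩ := h2
  rwa [← (toWeakSpace ℝ E).injective hzy]

lemma jdlg_compact_closureT (T : ι → E →L[ℝ] E) {M : ℝ} (hM : ∀ t, ‖T t‖ ≤ M)
    (horb : ∀ x : E, IsCompact (closure (toWeakSpace ℝ E '' {z : E | ∃ t, z = T t x}))) :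
    IsCompact (closure (Set.range fun t => ContinuousLinearMap.toWOT ℝ E E (T t))) := by
  set R := Set.range fun t => ContinuousLinearMap.toWOT ℝ E E (T t) with hR
  rw [isCompact_iff_ultrafilter_le_nhds]
  intro 𝔉 h𝔉
  have h𝔉' : closure R ∈ 𝔉 := le_principal_iff.mp h𝔉
  have hmem : ∀ x : E, ∃ y : WeakSpace ℝ E,
      y ∈ closure (toWeakSpace ℝ E '' {z : E | ∃ t, z = T t x}) ∧
      Tendsto (fun A : E →WOT[ℝ] E => toWeakSpace ℝ E (A x)) 𝔉 (𝓝 y) := by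
    intro x
    have hsub : closure R ⊆ (fun A : E →WOT[ℝ] E => toWeakSpace ℝ E (A x)) ⁻¹'
        (closure (toWeakSpace ℝ E '' {z : E | ∃ t, z = T t x})) :=
      fun A hA => jdlg_orbit_mem T hA x
    have hKmem : closure (toWeakSpace ℝ E '' {z : E | ∃ t, z = T t x}) ∈
        (𝔉.map (fun A : E →WOT[ℝ] E => toWeakSpace ℝ E (A x))) :=
      Filter.mem_map.mpr (Filter.mem_of_superset h𝔉' hsub)
    obtain ⟨y, hyK, hyT⟩ := (horb x).ultrafilter_le_nhds
      (𝔉.map (fun A : E →WOT[ℝ] E => toWeakSpace ℝ E (A x))) (le_principal_iff.mpr hKmem)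
    exact ⟨y, hyK, hyT⟩
  choose y hyK hyT using hmem
  have hadd : ∀ x x' : E, y (x + x') = y x + y x' := by
    intro x x'
    have h1 : Tendsto (fun A : E →WOT[ℝ] E => toWeakSpace ℝ E (A (x + x'))) 𝔉
        (𝓝 (y x + y x')) := by
      have := (hyT x).add (hyT x')
      refine this.congr fun A => ?_
      simp [map_add]
    exact tendsto_nhds_unique (hyT (x + x')) h1
  have hsmul : ∀ (c : ℝ) (x : E), y (c • x) = c • y x := by
    intro c x
    have h1 : Tendsto (fun A : E →WOT[ℝ] E => toWeakSpace ℝ E (A (c • x))) 𝔉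
        (𝓝 (c • y x)) := by
      have := (hyT x).const_smul c
      refine this.congr fun A => ?_
      simp [map_smul]
    exact tendsto_nhds_unique (hyT (c • x)) h1
  let A₀ : E →ₗ[ℝ] E :=
    { toFun := fun x => (toWeakSpace ℝ E).symm (y x)
      map_add' := fun x x' => by
        show (toWeakSpace ℝ E).symm (y (x + x')) = _
        rw [hadd, map_add]
      map_smul' := fun c x => by
        show (toWeakSpace ℝ E).symm (y (c • x)) = _
        rw [hsmul, map_smul]
        rfl }
  have hbound : ∀ x : E, ‖A₀ x‖ ≤ M * ‖x‖ := by
    intro x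
    refine jdlg_norm_bound T hM (x := x) ?_
    show toWeakSpace ℝ E ((toWeakSpace ℝ E).symm (y x)) ∈ _
    rw [LinearEquiv.apply_symm_apply]
    exact hyK x
  let A : E →L[ℝ] E := A₀.mkContinuous M hbound
  have hlim : ↑𝔉 ≤ 𝓝 (ContinuousLinearMap.toWOT ℝ E E A) := by
    rw [le_nhds_iff_forall_dual_apply_le_nhds]
    intro x φ
    have h1 : Tendsto (fun B : E →WOT[ℝ] E => (topDualPairing ℝ E).flip
        (toWeakSpace ℝ E (B x)) φ) 𝔉 (𝓝 ((topDualPairing ℝ E).flip (y x) φ)) :=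
      ((WeakBilin.eval_continuous ((topDualPairing ℝ E).flip) φ).tendsto (y x)).comp (hyT x)
    have h2 : ((topDualPairing ℝ E).flip (y x) φ) = φ (ContinuousLinearMap.toWOT ℝ E E A x) := by
      show φ ((toWeakSpace ℝ E).symm (y x)) = _
      rfl
    rw [h2] at h1
    exact h1
  refine ⟨ContinuousLinearMap.toWOT ℝ E E A, ?_, hlim⟩
  have : ContinuousLinearMap.toWOT ℝ E E A ∈ closure (closure R) :=
    mem_closure_iff_ultrafilter.mpr ⟨𝔉, h𝔉', hlim⟩
  rwa [closure_closure] at this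

end JdLGAux

set_option maxHeartbeats 2000000 in
/-- Banach-lattice version of the Jacobs–de Leeuw–Glicksberg splitting theorem for a
bounded positive representation of a commutative semigroup `S` (generating a group
`G`) with relatively weakly compact orbits. -/
theorem stmt_3
    {G : Type*} [AddCommGroup G]
    (S : AddSubsemigroup G)
    (hS_ne : (S : Set G).Nonempty)
    (hS_gen : AddSubgroup.closure (S : Set G) = ⊤)
    {E : Type*} [NormedAddCommGroup E] [Lattice E] [HasSolidNorm E] [IsOrderedAddMonoid E] [NormedSpace ℝ E] [CompleteSpace E]
    (T : S → (E →L[ℝ] E))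
    (h_pos : ∀ (t : S) (x : E), 0 ≤ x → 0 ≤ T t x)
    (h_sg : ∀ t s : S, T (t + s) = (T t).comp (T s))
    (h_bdd : ∃ M : ℝ, ∀ t : S, ‖T t‖ ≤ M)
    (h_orbit : ∀ x : E,
        IsCompact (closure ((toWeakSpace ℝ E) '' {z : E | ∃ t : S, z = T t x}))) :
    ∃ P : E →L[ℝ] E,
      (∀ x : E, P (P x) = P x) ∧
      (∀ x : E, 0 ≤ x → 0 ≤ P x) ∧
      (∀ t : S, P.comp (T t) = (T t).comp P) ∧
      (∀ x : E, (∀ t : S, T t x = x) → P x = x) ∧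
      (∃ Srep : G → (LinearMap.range (P : E →ₗ[ℝ] E) →L[ℝ] LinearMap.range (P : E →ₗ[ℝ] E)),
        (∀ (g : G) (x : LinearMap.range (P : E →ₗ[ℝ] E)), 0 ≤ (x : E) → 0 ≤ ((Srep g x : E))) ∧
        (∀ g : G, Function.Bijective (Srep g)) ∧
        (∀ g h : G, Srep (g + h) = (Srep g).comp (Srep h)) ∧
        (∃ M : ℝ, ∀ g : G, ‖Srep g‖ ≤ M) ∧
        (∀ (t : S) (x : LinearMap.range (P : E →ₗ[ℝ] E)), ((Srep (t : G) x : E)) = T t (x : E))) ∧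
      (∀ x : E, P x = 0 →
        (0 : WeakSpace ℝ E) ∈
          closure ((toWeakSpace ℝ E) '' {z : E | ∃ t : S, z = T t x})) := by
  classical
  obtain ⟨M₀, hM₀⟩ := h_bdd
  set M : ℝ := max M₀ 0 with hMdef
  have hM : ∀ t : S, ‖T t‖ ≤ M := fun t => le_max_of_le_left (hM₀ t)
  have hMp : (0 : ℝ) ≤ M := le_max_right _ _
  obtain ⟨t₀g, ht₀g⟩ := hS_ne
  set t₀ : S := ⟨t₀g, ht₀g⟩ with ht₀def
  set w : S → (E →WOT[ℝ] E) := fun t => ContinuousLinearMap.toWOT ℝ E E (T t) with hwdef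
  set 𝓣 : Set (E →WOT[ℝ] E) := closure (Set.range w) with h𝓣def
  have h𝓣closed : IsClosed 𝓣 := isClosed_closure
  have h𝓣cpt : IsCompact 𝓣 := jdlg_compact_closureT T hM h_orbit
  have hw𝓣 : ∀ t : S, w t ∈ 𝓣 := fun t => subset_closure ⟨t, rfl⟩
  -- multiplication of generators
  have hwmulw : ∀ t s : S, jdlgMul (w t) (w s) = w (t + s) := by
    intro t s
    show (ContinuousLinearMap.toWOT ℝ E E) _ = _
    rw [LinearEquiv.symm_apply_apply, LinearEquiv.symm_apply_apply, ← h_sg]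
  -- commutativity of 𝓣
  have hcomm1 : ∀ t : S, ∀ A ∈ 𝓣, jdlgMul A (w t) = jdlgMul (w t) A := by
    intro t A hA
    have hcl : IsClosed {B : E →WOT[ℝ] E | jdlgMul B (w t) = jdlgMul (w t) B} :=
      isClosed_eq (continuous_jdlgMul_right (w t)) (continuous_jdlgMul_left (w t))
    refine closure_minimal ?_ hcl hA
    rintro - ⟨s, rfl⟩
    show jdlgMul (w s) (w t) = jdlgMul (w t) (w s)
    rw [hwmulw, hwmulw, add_comm]
  have hcomm : ∀ A ∈ 𝓣, ∀ B ∈ 𝓣, jdlgMul A B = jdlgMul B A := by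
    intro A hA B hB
    have hcl : IsClosed {B : E →WOT[ℝ] E | jdlgMul A B = jdlgMul B A} :=
      isClosed_eq (continuous_jdlgMul_left A) (continuous_jdlgMul_right A)
    refine closure_minimal ?_ hcl hB
    rintro - ⟨s, rfl⟩
    show jdlgMul A (w s) = jdlgMul (w s) A
    exact hcomm1 s A hA
  -- closure under multiplication
  have hmulmem : ∀ A ∈ 𝓣, ∀ B ∈ 𝓣, jdlgMul A B ∈ 𝓣 := by
    intro A hA B hB
    have hstep : ∀ s : S, jdlgMul A (w s) ∈ 𝓣 := by
      intro s
      have hmapsto : Set.MapsTo (fun C => jdlgMul C (w s)) (Set.range w) 𝓣 := by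
        rintro - ⟨u, rfl⟩
        show jdlgMul (w u) (w s) ∈ 𝓣
        rw [hwmulw]
        exact hw𝓣 _
      have h2 := (hmapsto.closure (continuous_jdlgMul_right (w s))) hA
      rwa [h𝓣closed.closure_eq] at h2
    have hmapsto2 : Set.MapsTo (fun B => jdlgMul A B) (Set.range w) 𝓣 := by
      rintro - ⟨s, rfl⟩
      show jdlgMul A (w s) ∈ 𝓣
      exact hstep s
    have h2 := (hmapsto2.closure (continuous_jdlgMul_left A)) hB
    rwa [h𝓣closed.closure_eq] at h2
  -- the kernel
  haveI : Nonempty ↥𝓣 := ⟨⟨w t₀, hw𝓣 t₀⟩⟩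
  set 𝓚 : Set (E →WOT[ℝ] E) := ⋂ A : ↥𝓣, (fun B => jdlgMul A.1 B) '' 𝓣 with h𝓚def
  have h𝓚sub : 𝓚 ⊆ 𝓣 := by
    intro k hk
    obtain ⟨B, hB, rfl⟩ := Set.mem_iInter.mp hk ⟨w t₀, hw𝓣 t₀⟩
    exact hmulmem _ (hw𝓣 t₀) _ hB
  have h𝓚comp : ∀ q ∈ 𝓚, ∀ A ∈ 𝓣, ∃ u ∈ 𝓣, jdlgMul A u = q := by
    intro q hq A hA
    obtain ⟨u, hu, huq⟩ := Set.mem_iInter.mp hq ⟨A, hA⟩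
    exact ⟨u, hu, huq⟩
  have h𝓚ideal : ∀ q ∈ 𝓚, ∀ B ∈ 𝓣, jdlgMul q B ∈ 𝓚 := by
    intro q hq B hB
    rw [Set.mem_iInter]
    rintro ⟨A, hA⟩
    obtain ⟨u, hu, hqu⟩ := h𝓚comp q hq A hA
    refine ⟨jdlgMul u B, hmulmem u hu B hB, ?_⟩
    show jdlgMul A (jdlgMul u B) = jdlgMul q B
    rw [← jdlgMul_assoc, hqu]
  have h𝓚ne : 𝓚.Nonempty := by
    refine IsCompact.nonempty_iInter_of_directed_nonempty_isCompact_isClosed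
      (fun A : ↥𝓣 => (fun B => jdlgMul A.1 B) '' 𝓣) ?_ ?_ ?_ ?_
    · rintro A B
      refine ⟨⟨jdlgMul A.1 B.1, hmulmem _ A.2 _ B.2⟩, ?_, ?_⟩
      · rintro - ⟨u, hu, rfl⟩
        refine ⟨jdlgMul B.1 u, hmulmem _ B.2 _ hu, ?_⟩
        show jdlgMul A.1 (jdlgMul B.1 u) = jdlgMul (jdlgMul A.1 B.1) u
        rw [jdlgMul_assoc]
      · rintro - ⟨u, hu, rfl⟩
        refine ⟨jdlgMul A.1 u, hmulmem _ A.2 _ hu, ?_⟩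
        show jdlgMul B.1 (jdlgMul A.1 u) = jdlgMul (jdlgMul A.1 B.1) u
        rw [← jdlgMul_assoc, hcomm B.1 B.2 A.1 A.2]
    · exact fun A => ⟨jdlgMul A.1 (w t₀), Set.mem_image_of_mem _ (hw𝓣 t₀)⟩
    · exact fun A => h𝓣cpt.image (continuous_jdlgMul_left A.1)
    · exact fun A => (h𝓣cpt.image (continuous_jdlgMul_left A.1)).isClosed
  obtain ⟨q, hq⟩ := h𝓚ne
  have hq𝓣 : q ∈ 𝓣 := h𝓚sub hq
  -- build the idempotent
  obtain ⟨r, hr𝓣, hqr⟩ := h𝓚comp q hq (jdlgMul q q) (hmulmem q hq𝓣 q hq𝓣)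
  set Pw : E →WOT[ℝ] E := jdlgMul q r with hPwdef
  have hPw𝓚 : Pw ∈ 𝓚 := h𝓚ideal q hq r hr𝓣
  have hPw𝓣 : Pw ∈ 𝓣 := h𝓚sub hPw𝓚
  have hidem : jdlgMul Pw Pw = Pw := by
    have a2 : jdlgMul (jdlgMul q r) q = jdlgMul (jdlgMul q q) r := by
      rw [jdlgMul_assoc, hcomm r hr𝓣 q hq𝓣, ← jdlgMul_assoc]
    calc jdlgMul (jdlgMul q r) (jdlgMul q r)
        = jdlgMul (jdlgMul (jdlgMul q r) q) r := (jdlgMul_assoc _ q r).symm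
      _ = jdlgMul (jdlgMul (jdlgMul q q) r) r := by rw [a2]
      _ = jdlgMul q r := by rw [hqr]
  have hPid : ∀ k ∈ 𝓚, jdlgMul Pw k = k := by
    intro k hk
    obtain ⟨u, hu, huk⟩ := h𝓚comp k hk Pw hPw𝓣
    rw [← huk, ← jdlgMul_assoc, hidem]
  have hinv : ∀ k ∈ 𝓚, ∃ k' ∈ 𝓚, jdlgMul k k' = Pw := by
    intro k hk
    have hk𝓣 := h𝓚sub hk
    obtain ⟨v, hv, hvP⟩ := h𝓚comp Pw hPw𝓚 k hk𝓣
    refine ⟨jdlgMul Pw v, h𝓚ideal Pw hPw𝓚 v hv, ?_⟩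
    rw [← jdlgMul_assoc, hcomm k hk𝓣 Pw hPw𝓣, jdlgMul_assoc, hvP, hidem]
  -- the kernel as a commutative group
  let K := {k : E →WOT[ℝ] E // k ∈ 𝓚}
  have hinv' : ∀ k : K, ∃ k' : K, jdlgMul k.1 k'.1 = Pw := by
    intro k
    obtain ⟨k', hk', h⟩ := hinv k.1 k.2
    exact ⟨⟨k', hk'⟩, h⟩
  choose kinv hkinv using hinv'
  letI instK : CommGroup K :=
    { mul := fun x y => ⟨jdlgMul x.1 y.1, h𝓚ideal x.1 x.2 y.1 (h𝓚sub y.2)⟩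
      one := ⟨Pw, hPw𝓚⟩
      inv := kinv
      mul_assoc := fun a b c => Subtype.ext (jdlgMul_assoc a.1 b.1 c.1)
      one_mul := fun a => Subtype.ext (hPid a.1 a.2)
      mul_one := fun a => Subtype.ext (by
        show jdlgMul a.1 Pw = a.1
        rw [hcomm a.1 (h𝓚sub a.2) Pw hPw𝓣]
        exact hPid a.1 a.2)
      inv_mul_cancel := fun a => Subtype.ext (by
        show jdlgMul (kinv a).1 a.1 = Pw
        rw [hcomm (kinv a).1 (h𝓚sub (kinv a).2) a.1 (h𝓚sub a.2)]
        exact hkinv a)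
      mul_comm := fun a b => Subtype.ext (hcomm a.1 (h𝓚sub a.2) b.1 (h𝓚sub b.2)) }
  have hmul1 : ∀ a b : K, (a * b).1 = jdlgMul a.1 b.1 := fun a b => rfl
  have hone1 : (1 : K).1 = Pw := rfl
  -- the semigroup homomorphism into K
  let aK : S → K := fun t => ⟨jdlgMul Pw (w t), h𝓚ideal Pw hPw𝓚 (w t) (hw𝓣 t)⟩
  have haK : ∀ t s : S, aK (t + s) = aK t * aK s := by
    intro t s
    apply Subtype.ext
    show jdlgMul Pw (w (t + s)) = jdlgMul (jdlgMul Pw (w t)) (jdlgMul Pw (w s))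
    have key : jdlgMul (jdlgMul Pw (w t)) (jdlgMul Pw (w s))
        = jdlgMul (jdlgMul Pw Pw) (jdlgMul (w t) (w s)) := by
      calc jdlgMul (jdlgMul Pw (w t)) (jdlgMul Pw (w s))
          = jdlgMul Pw (jdlgMul (w t) (jdlgMul Pw (w s))) := jdlgMul_assoc _ _ _
        _ = jdlgMul Pw (jdlgMul (jdlgMul (w t) Pw) (w s)) := by
            rw [← jdlgMul_assoc (w t) Pw (w s)]
        _ = jdlgMul Pw (jdlgMul (jdlgMul Pw (w t)) (w s)) := by
            rw [hcomm (w t) (hw𝓣 t) Pw hPw𝓣]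
        _ = jdlgMul Pw (jdlgMul Pw (jdlgMul (w t) (w s))) := by
            rw [jdlgMul_assoc Pw (w t) (w s)]
        _ = jdlgMul (jdlgMul Pw Pw) (jdlgMul (w t) (w s)) := (jdlgMul_assoc _ _ _).symm
    rw [key, hidem, hwmulw]
  -- decomposition of G as differences of elements of S
  have hdecomp : ∀ g : G, ∃ s t : S, g = (s : G) - (t : G) := by
    intro g
    let D : AddSubgroup G :=
      { carrier := {g | ∃ s t : S, g = (s : G) - (t : G)}
        zero_mem' := ⟨t₀, t₀, by simp⟩
        add_mem' := by
          rintro a b ⟨s1, t1, rfl⟩ ⟨s2, t2, rfl⟩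
          refine ⟨s1 + s2, t1 + t2, ?_⟩
          show (s1 : G) - t1 + ((s2 : G) - t2) = ((s1 : G) + s2) - ((t1 : G) + t2)
          abel
        neg_mem' := by
          rintro a ⟨s1, t1, rfl⟩
          exact ⟨t1, s1, by rw [neg_sub]⟩ }
    have hsubD : (S : Set G) ⊆ D := by
      intro s hs
      refine ⟨⟨s, hs⟩ + ⟨s, hs⟩, ⟨s, hs⟩, ?_⟩
      show s = (s + s) - s
      abel
    have hD : AddSubgroup.closure (S : Set G) ≤ D := (AddSubgroup.closure_le D).mpr hsubD
    rw [hS_gen] at hD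
    exact hD (AddSubgroup.mem_top g)
  choose gs gt hg using hdecomp
  let σK : G → K := fun g => aK (gs g) * (aK (gt g))⁻¹
  have hwd : ∀ (g : G) (s t : S), g = (s : G) - t → σK g = aK s * (aK t)⁻¹ := by
    intro g s t hgst
    have h1 : ((gs g : G) - gt g) = (s : G) - t := by rw [← hg g, ← hgst]
    have h3 : gs g + t = s + gt g := by
      apply Subtype.ext
      show (gs g : G) + t = (s : G) + gt g
      exact sub_eq_sub_iff_add_eq_add.mp h1
    have h4 : aK (gs g) * aK t = aK s * aK (gt g) := by rw [← haK, ← haK, h3]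
    show aK (gs g) * (aK (gt g))⁻¹ = aK s * (aK t)⁻¹
    rw [← div_eq_mul_inv, ← div_eq_mul_inv, div_eq_div_iff_mul_eq_mul]
    exact h4
  have hσhom : ∀ g h : G, σK (g + h) = σK g * σK h := by
    intro g h
    have hdec : g + h = (((gs g + gs h : S) : G)) - ((gt g + gt h : S) : G) := by
      show g + h = ((gs g : G) + gs h) - ((gt g : G) + gt h)
      conv_lhs => rw [hg g, hg h]
      abel
    rw [hwd (g + h) _ _ hdec, haK, haK]
    show aK (gs g) * aK (gs h) * (aK (gt g) * aK (gt h))⁻¹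
      = aK (gs g) * (aK (gt g))⁻¹ * (aK (gs h) * (aK (gt h))⁻¹)
    exact jdlg_group_helper _ _ _ _
  have hσzero : σK 0 = 1 := by
    have h0 : (0 : G) = (t₀ : G) - t₀ := by simp
    rw [hwd 0 t₀ t₀ h0, mul_inv_cancel]
  have hσt : ∀ t : S, σK (t : G) = aK t := by
    intro t
    have hdec : (t : G) = ((t + t : S) : G) - (t : G) := by
      show (t : G) = ((t : G) + t) - t
      abel
    rw [hwd _ _ _ hdec, haK, mul_inv_cancel_right]
  -- the projection as a continuous linear map
  set P : E →L[ℝ] E := (ContinuousLinearMap.toWOT ℝ E E).symm Pw with hPdef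
  have happly : ∀ (A B : E →WOT[ℝ] E) (x : E), A = B → A x = B x := fun A B x h => by rw [h]
  have hPP : ∀ x : E, P (P x) = P x := by
    intro x
    have h1 := happly _ _ x hidem
    rw [jdlgMul_apply] at h1
    exact h1
  have hpos𝓣 : ∀ A ∈ 𝓣, ∀ x : E, 0 ≤ x → 0 ≤ A x :=
    fun A hA x hx => jdlg_pos_closure T h_pos hx (jdlg_orbit_mem T hA x)
  have hnorm𝓣 : ∀ A ∈ 𝓣, ∀ x : E, ‖A x‖ ≤ M * ‖x‖ :=
    fun A hA x => jdlg_norm_bound T hM (jdlg_orbit_mem T hA x)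
  have hPcomm : ∀ t : S, P.comp (T t) = (T t).comp P := by
    intro t
    ext x
    have h1 := happly _ _ x (hcomm1 t Pw hPw𝓣)
    rw [jdlgMul_apply, jdlgMul_apply] at h1
    exact h1
  have hfix𝓣 : ∀ A ∈ 𝓣, ∀ x : E, (∀ t : S, T t x = x) → A x = x := by
    intro A hA x hx
    have horb1 : {z : E | ∃ t : S, z = T t x} = {x} := by
      ext z
      simp only [Set.mem_setOf_eq, Set.mem_singleton_iff]
      constructor
      · rintro ⟨t, rfl⟩
        exact hx t
      · rintro rfl
        exact ⟨t₀, (hx t₀).symm⟩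
    have h1 := jdlg_orbit_mem T hA x
    rw [horb1, Set.image_singleton, closure_singleton, Set.mem_singleton_iff] at h1
    exact (toWeakSpace ℝ E).injective h1
  -- the range of P and restricted operators
  have hmapsF : ∀ k ∈ 𝓚, ∀ x : E, k x ∈ LinearMap.range (P : E →ₗ[ℝ] E) := by
    intro k hk x
    have h1 := happly _ _ x (hPid k hk)
    rw [jdlgMul_apply] at h1
    exact ⟨k x, h1⟩
  have hPF : ∀ x : E, x ∈ LinearMap.range (P : E →ₗ[ℝ] E) → P x = x := by
    rintro - ⟨y, rfl⟩
    exact hPP y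
  let ρ : K → (LinearMap.range (P : E →ₗ[ℝ] E) →L[ℝ] LinearMap.range (P : E →ₗ[ℝ] E)) := fun k =>
    ContinuousLinearMap.codRestrict
      (((ContinuousLinearMap.toWOT ℝ E E).symm k.1).comp
        (Submodule.subtypeL (LinearMap.range (P : E →ₗ[ℝ] E))))
      (LinearMap.range (P : E →ₗ[ℝ] E)) (fun x => hmapsF k.1 k.2 x)
  have hρapp : ∀ (k : K) (x : LinearMap.range (P : E →ₗ[ℝ] E)), ((ρ k x : E)) = k.1 (x : E) :=
    fun k x => rfl
  have hρmul : ∀ k k' : K, ρ (k * k') = (ρ k).comp (ρ k') := by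
    intro k k'
    exact ContinuousLinearMap.ext fun x => rfl
  have hρone : ∀ x : LinearMap.range (P : E →ₗ[ℝ] E), ρ 1 x = x := by
    intro x
    apply Subtype.ext
    exact hPF x.1 x.2
  refine ⟨P, hPP, fun x hx => hpos𝓣 Pw hPw𝓣 x hx, hPcomm,
    fun x hx => hfix𝓣 Pw hPw𝓣 x hx, ?_, ?_⟩
  · refine ⟨fun g => ρ (σK g), ?_, ?_, ?_, ⟨M, ?_⟩, ?_⟩
    · intro g x hx
      exact hpos𝓣 (σK g).1 (h𝓚sub (σK g).2) x.1 hx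
    · intro g
      refine Function.bijective_iff_has_inverse.mpr ⟨ρ (σK (-g)), ?_, ?_⟩
      · intro x
        have h1 : ρ (σK (-g)) (ρ (σK g) x) = ρ (σK (-g) * σK g) x := by rw [hρmul]; rfl
        rw [h1, ← hσhom, neg_add_cancel, hσzero]
        exact hρone x
      · intro x
        have h1 : ρ (σK g) (ρ (σK (-g)) x) = ρ (σK g * σK (-g)) x := by rw [hρmul]; rfl
        rw [h1, ← hσhom, add_neg_cancel, hσzero]
        exact hρone x
    · intro g h
      show ρ (σK (g + h)) = (ρ (σK g)).comp (ρ (σK h))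
      rw [hσhom, hρmul]
    · intro g
      refine ContinuousLinearMap.opNorm_le_bound _ hMp fun x => ?_
      exact hnorm𝓣 (σK g).1 (h𝓚sub (σK g).2) x.1
    · intro t x
      rw [hρapp, hσt]
      show jdlgMul Pw (w t) (x : E) = T t (x : E)
      rw [jdlgMul_apply]
      have hx : T t (x : E) ∈ LinearMap.range (P : E →ₗ[ℝ] E) := by
        obtain ⟨y, hy⟩ := x.2
        refine ⟨T t y, ?_⟩
        calc P (T t y) = T t (P y) := by
              rw [← ContinuousLinearMap.comp_apply, hPcomm t, ContinuousLinearMap.comp_apply]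
          _ = T t (x : E) := congrArg (T t) hy
      exact hPF _ hx
  · intro x hx
    have h1 := jdlg_orbit_mem T hPw𝓣 x
    have h2 : toWeakSpace ℝ E (Pw x) = 0 := by
      have h3 : Pw x = P x := rfl
      rw [h3, hx, map_zero]
    rw [h2] at h1
    exact h1
end

section
/- Let G be a commutative additive group and let (T_t)_{t∈G} be a bounded group representation of G on a Banach space E, i.e. each T_t is a bounded linear operator, T_{t+s} = T_t ∘ T_s for all t,s ∈ G, T_0 = id, and sup_{t∈G} ‖T_t‖ < ∞. Let S ⊆ G be a nonempty subsemigroup whose generated subgroup is all of G. If for every x ∈ E there exists z ∈ E such that for every ε > 0 there is s ∈ S with ‖T_{s+t} x − z‖ ≤ ε for all t ∈ S (i.e. the representation (T_t)_{t∈S} is strongly convergent), then T_t = id_E for all t ∈ G. -/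
/-- If a bounded group representation of a commutative group `G` on a Banach space
restricts to a strongly convergent semigroup representation on a subsemigroup `S`
generating `G`, then the representation is trivial. -/
theorem stmt_5
    {G : Type*} [AddCommGroup G]
    {E : Type*} [NormedAddCommGroup E] [NormedSpace ℝ E] [CompleteSpace E]
    (T : G → (E →L[ℝ] E))
    (h_zero : T 0 = ContinuousLinearMap.id ℝ E)
    (h_add : ∀ t s : G, T (t + s) = (T t).comp (T s))
    (h_bdd : ∃ M : ℝ, ∀ t : G, ‖T t‖ ≤ M)
    (S : AddSubsemigroup G)
    (hS_ne : (S : Set G).Nonempty)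
    (hS_gen : AddSubgroup.closure (S : Set G) = ⊤)
    (h_conv : ∀ x : E, ∃ z : E, ∀ ε : ℝ, 0 < ε →
        ∃ s : S, ∀ t : S, ‖T ((s : G) + (t : G)) x - z‖ ≤ ε) :
    ∀ t : G, T t = ContinuousLinearMap.id ℝ E := by
  obtain ⟨M, hM⟩ := h_bdd
  set M' : ℝ := max M 1 with hM'def
  have hM' : ∀ t : G, ‖T t‖ ≤ M' := fun t => le_trans (hM t) (le_max_left _ _)
  have hM'pos : (0:ℝ) < M' := lt_of_lt_of_le one_pos (le_max_right _ _)
  have hinv : ∀ (t : G) (y : E), T (-t) (T t y) = y := by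
    intro t y
    have h1 : T (-t + t) = (T (-t)).comp (T t) := h_add (-t) t
    rw [neg_add_cancel, h_zero] at h1
    have := congrArg (fun f : E →L[ℝ] E => f y) h1
    simpa using this.symm
  obtain ⟨s0, hs0⟩ := hS_ne
  intro t
  ext x
  obtain ⟨z, hz⟩ := h_conv x
  -- Step 1: T u z = z for u ∈ S
  have hfixS : ∀ u ∈ S, T u z = z := by
    intro u hu
    have key : ∀ ε : ℝ, 0 < ε → ‖T u z - z‖ ≤ (M' + 1) * ε := by
      intro ε hε
      obtain ⟨s, hs⟩ := hz ε hε
      have h1 : ‖T ((s:G) + s0) x - z‖ ≤ ε := hs ⟨s0, hs0⟩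
      have h2 : ‖T ((s:G) + (u + s0)) x - z‖ ≤ ε := hs ⟨u + s0, S.add_mem hu hs0⟩
      have hcomp : T u (T ((s:G) + s0) x) = T ((s:G) + (u + s0)) x := by
        have := congrArg (fun f : E →L[ℝ] E => f x) (h_add u ((s:G) + s0))
        have heq : u + ((s:G) + s0) = (s:G) + (u + s0) := by abel
        rw [heq] at this
        simpa using this.symm
      have hdecomp : T u z - z
          = T u (z - T ((s:G) + s0) x) + (T ((s:G) + (u + s0)) x - z) := by
        rw [map_sub, hcomp]; abel
      rw [hdecomp]
      calc ‖T u (z - T ((s:G) + s0) x) + (T ((s:G) + (u + s0)) x - z)‖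
          ≤ ‖T u (z - T ((s:G) + s0) x)‖ + ‖T ((s:G) + (u + s0)) x - z‖ :=
            norm_add_le _ _
        _ ≤ M' * ε + ε := by
            gcongr
            calc ‖T u (z - T ((s:G) + s0) x)‖ ≤ ‖T u‖ * ‖z - T ((s:G) + s0) x‖ :=
                  (T u).le_opNorm _
              _ ≤ M' * ε := by
                  have : ‖z - T ((s:G) + s0) x‖ ≤ ε := by rwa [norm_sub_rev] at h1
                  exact mul_le_mul (hM' u) this (norm_nonneg _) (le_of_lt hM'pos)
        _ = (M' + 1) * ε := by ring
    have hle : ‖T u z - z‖ ≤ 0 := by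
      refine le_of_forall_pos_le_add ?_
      intro δ hδ
      have := key (δ / (M' + 1)) (div_pos hδ (by linarith))
      have h2 : (M' + 1) * (δ / (M' + 1)) = δ := by
        field_simp
      rw [h2] at this
      linarith
    have : T u z - z = 0 := norm_le_zero_iff.mp hle
    exact sub_eq_zero.mp this
  -- Step 2: T t z = z for all t : G
  have hfixG : ∀ g : G, T g z = z := by
    intro g
    have hg : g ∈ AddSubgroup.closure (S : Set G) := by rw [hS_gen]; trivial
    induction hg using AddSubgroup.closure_induction with
    | mem u hu => exact hfixS u hu
    | zero => rw [h_zero]; rfl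
    | add a b _ _ ha hb =>
        have := congrArg (fun f : E →L[ℝ] E => f z) (h_add a b)
        simp only [ContinuousLinearMap.comp_apply] at this
        rw [this, hb, ha]
    | neg a _ ha =>
        have := hinv a z
        rw [ha] at this
        exact this
  -- Step 3: x = z
  have hxz : x = z := by
    have hle : ‖x - z‖ ≤ 0 := by
      refine le_of_forall_pos_le_add ?_
      intro δ hδ
      obtain ⟨s, hs⟩ := hz (δ / M') (div_pos hδ hM'pos)
      have h1 : ‖T ((s:G) + s0) x - z‖ ≤ δ / M' := hs ⟨s0, hs0⟩
      have h2 : T (-((s:G) + s0)) (T ((s:G) + s0) x - z) = x - z := by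
        rw [map_sub, hinv, hfixG]
      have h3 : ‖x - z‖ ≤ M' * (δ / M') := by
        rw [← h2]
        calc ‖T (-((s:G) + s0)) (T ((s:G) + s0) x - z)‖
            ≤ ‖T (-((s:G) + s0))‖ * ‖T ((s:G) + s0) x - z‖ :=
              (T _).le_opNorm _
          _ ≤ M' * (δ / M') :=
              mul_le_mul (hM' _) h1 (norm_nonneg _) (le_of_lt hM'pos)
      have h4 : M' * (δ / M') = δ := by field_simp
      rw [h4] at h3
      linarith
    have : x - z = 0 := norm_le_zero_iff.mp hle
    exact sub_eq_zero.mp this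
  simp only [ContinuousLinearMap.id_apply]
  rw [hxz, hfixG]
end

section
/- Let E be a Banach lattice whose norm is strictly monotone, meaning ‖f‖ < ‖g‖ whenever 0 ≤ f ≤ g and f ≠ g. Let S be a semigroup and (T_t)_{t∈S} a family of positive bounded linear operators on E with T_{ts} = T_t ∘ T_s and ‖T_t‖ ≤ 1 for every t ∈ S. Then every super fixed point of the family is a fixed point (i.e. if x ≥ 0 and T_t x ≥ x for all t ∈ S, then T_t x = x for all t ∈ S), and the fixed space is a sublattice: if T_t x = x for all t ∈ S, then T_t |x| = |x| for all t ∈ S. -/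
/-- On a Banach lattice with strictly monotone norm, for a semigroup of positive
contractions every super fixed point is a fixed point and the fixed space is a
sublattice. -/
theorem stmt_8
    {E : Type*} [NormedAddCommGroup E] [Lattice E] [HasSolidNorm E] [IsOrderedAddMonoid E] [NormedSpace ℝ E] [CompleteSpace E]
    (h_strict : ∀ f g : E, 0 ≤ f → f ≤ g → f ≠ g → ‖f‖ < ‖g‖)
    {S : Type*} [Semigroup S]
    (T : S → (E →L[ℝ] E))
    (h_pos : ∀ (t : S) (x : E), 0 ≤ x → 0 ≤ T t x)
    (h_sg : ∀ t s : S, T (t * s) = (T t).comp (T s))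
    (h_contr : ∀ t : S, ‖T t‖ ≤ 1) :
    (∀ x : E, 0 ≤ x → (∀ t : S, x ≤ T t x) → ∀ t : S, T t x = x) ∧
    (∀ x : E, (∀ t : S, T t x = x) → ∀ t : S, T t |x| = |x|) := by
  have part1 : ∀ x : E, 0 ≤ x → (∀ t : S, x ≤ T t x) → ∀ t : S, T t x = x := by
    intro x hx hsup t
    by_contra hne
    have hlt : ‖x‖ < ‖T t x‖ := h_strict x (T t x) hx (hsup t) (fun h => hne h.symm)
    have hle : ‖T t x‖ ≤ ‖x‖ := by
      calc ‖T t x‖ ≤ ‖T t‖ * ‖x‖ := (T t).le_opNorm x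
        _ ≤ 1 * ‖x‖ := by
            exact mul_le_mul_of_nonneg_right (h_contr t) (norm_nonneg x)
        _ = ‖x‖ := one_mul _
    exact absurd (hlt.trans_le hle) (lt_irrefl _)
  refine ⟨part1, ?_⟩
  intro x hfix
  have hsup : ∀ t : S, |x| ≤ T t |x| := by
    intro t
    have h1 : T t x ≤ T t |x| := by
      have h := h_pos t (|x| - x) (sub_nonneg.2 (le_abs_self x))
      rw [map_sub] at h
      exact sub_nonneg.1 h
    have h2 : -(T t x) ≤ T t |x| := by
      have h := h_pos t (|x| + x)
        (by rw [← sub_neg_eq_add]; exact sub_nonneg.2 (neg_le_abs x))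
      rw [map_add] at h
      rw [← sub_neg_eq_add] at h
      exact sub_nonneg.1 h
    calc |x| = |T t x| := by rw [hfix t]
      _ ≤ T t |x| := abs_le'.2 ⟨h1, h2⟩
  exact part1 |x| (abs_nonneg x) hsup
end

section
/- Let E be a Banach lattice, S a semigroup, and (T_t)_{t∈S} a family of positive bounded linear operators on E with T_{ts} = T_t ∘ T_s and sup_{t∈S} ‖T_t‖ < ∞. Suppose there exists a continuous linear functional φ on E which is strictly positive (φ(f) > 0 for every f ≥ 0 with f ≠ 0) and satisfies φ(T_t f) ≤ φ(f) for every f ≥ 0 and every t ∈ S. Then every super fixed point is a fixed point (if x ≥ 0 and T_t x ≥ x for all t ∈ S, then T_t x = x for all t ∈ S), and the fixed space is a sublattice: if T_t x = x for all t ∈ S, then T_t |x| = |x| for all t ∈ S. -/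
/-- If a bounded semigroup of positive operators on a Banach lattice admits a
strictly positive continuous linear functional `φ` with `φ ∘ T_t ≤ φ` on the
positive cone, then every super fixed point is a fixed point and the fixed space
is a sublattice. -/
theorem stmt_9
    {E : Type*} [NormedAddCommGroup E] [Lattice E] [HasSolidNorm E] [IsOrderedAddMonoid E] [NormedSpace ℝ E] [CompleteSpace E]
    {S : Type*} [Semigroup S]
    (T : S → (E →L[ℝ] E))
    (h_pos : ∀ (t : S) (x : E), 0 ≤ x → 0 ≤ T t x)
    (h_sg : ∀ t s : S, T (t * s) = (T t).comp (T s))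
    (h_bdd : ∃ M : ℝ, ∀ t : S, ‖T t‖ ≤ M)
    (φ : E →L[ℝ] ℝ)
    (hφ_strict : ∀ f : E, 0 ≤ f → f ≠ 0 → 0 < φ f)
    (hφ_dec : ∀ (t : S) (f : E), 0 ≤ f → φ (T t f) ≤ φ f) :
    (∀ x : E, 0 ≤ x → (∀ t : S, x ≤ T t x) → ∀ t : S, T t x = x) ∧
    (∀ x : E, (∀ t : S, T t x = x) → ∀ t : S, T t |x| = |x|) := by
  have key : ∀ x : E, 0 ≤ x → (∀ t : S, x ≤ T t x) → ∀ t : S, T t x = x := by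
    intro x hx hsup t
    by_contra h
    have hd : 0 ≤ T t x - x := sub_nonneg.2 (hsup t)
    have hne : T t x - x ≠ 0 := fun h0 => h (by
      have := sub_eq_zero.mp h0; exact this)
    have h1 : 0 < φ (T t x - x) := hφ_strict _ hd hne
    have h2 : φ (T t x) ≤ φ x := hφ_dec t x hx
    rw [map_sub] at h1
    linarith
  refine ⟨key, ?_⟩
  intro x hfix t
  refine key |x| (abs_nonneg x) (fun s => ?_) t
  have h1 : T s x ≤ T s |x| := by
    have := h_pos s (|x| - x) (sub_nonneg.2 (le_abs_self x))
    rw [map_sub] at this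
    exact sub_nonneg.mp this
  have h2 : -(T s x) ≤ T s |x| := by
    have := h_pos s (|x| + x) (by
      have h := sub_nonneg.mpr (neg_le_abs x)
      rwa [sub_neg_eq_add] at h)
    rw [map_add, ← sub_neg_eq_add] at this
    rw [← sub_nonneg, sub_neg_eq_add, ← sub_neg_eq_add]
    exact this
  calc |x| = |T s x| := by rw [hfix s]
    _ ≤ T s |x| := abs_le'.mpr ⟨h1, h2⟩
end

section
/- Let E be a Banach lattice, S a commutative semigroup, and (T_t)_{t∈S} a family of positive bounded linear operators on E with T_{t+s} = T_t ∘ T_s and sup_{t∈S} ‖T_t‖ < ∞. Assume the family is irreducible: the only closed ideals I of E with T_t I ⊆ I for all t ∈ S are {0} and E. Then every super fixed point is a fixed point (if x ≥ 0 and T_t x ≥ x for all t ∈ S, then T_t x = x for all t ∈ S), and the fixed space is a sublattice: if T_t x = x for all t ∈ S, then T_t |x| = |x| for all t ∈ S. -/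
open Finset Filter Topology

section Aux

variable {E : Type*} [NormedAddCommGroup E] [Lattice E] [HasSolidNorm E] [IsOrderedAddMonoid E] [NormedSpace ℝ E]

private lemma sfp_dyadic_smul_nonneg {x : E} (hx : 0 ≤ x) :
    ∀ (n m : ℕ), 0 ≤ ((m : ℝ) / 2 ^ n) • x := by
  intro n
  induction n with
  | zero =>
    intro m
    simpa [Nat.cast_smul_eq_nsmul] using nsmul_nonneg hx m
  | succ n ih =>
    intro m
    have h2 : (2 : ℕ) • (((m : ℝ) / 2 ^ (n + 1)) • x) = ((m : ℝ) / 2 ^ n) • x := by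
      rw [← Nat.cast_smul_eq_nsmul ℝ, smul_smul]
      norm_num
      ring_nf
    exact nsmul_two_semiclosed (by rw [h2]; exact ih m)

private lemma sfp_smul_nonneg {a : ℝ} {x : E} (ha : 0 ≤ a) (hx : 0 ≤ x) : 0 ≤ a • x := by
  set q : ℕ → ℝ := fun n => (⌈a * 2 ^ n⌉₊ : ℝ) / 2 ^ n with hq
  have hq1 : ∀ n, a ≤ q n := by
    intro n
    rw [hq, le_div_iff₀ (by positivity)]
    exact Nat.le_ceil _
  have hq2 : ∀ n, q n ≤ a + (1 / 2 : ℝ) ^ n := by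
    intro n
    rw [hq, div_le_iff₀ (by positivity)]
    have := (Nat.ceil_lt_add_one (by positivity : (0:ℝ) ≤ a * 2 ^ n)).le
    calc (⌈a * 2 ^ n⌉₊ : ℝ) ≤ a * 2 ^ n + 1 := this
      _ = (a + (1/2:ℝ)^n) * 2 ^ n := by rw [add_mul, div_pow, one_pow, div_mul_cancel₀]; positivity
  have hlim : Tendsto q atTop (𝓝 a) := by
    have h0 : Tendsto (fun n : ℕ => a + (1 / 2 : ℝ) ^ n) atTop (𝓝 (a + 0)) :=
      tendsto_const_nhds.add (tendsto_pow_atTop_nhds_zero_of_lt_one (by norm_num) (by norm_num))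
    rw [add_zero] at h0
    exact tendsto_of_tendsto_of_tendsto_of_le_of_le tendsto_const_nhds h0 hq1 hq2
  have hlim2 : Tendsto (fun n => q n • x) atTop (𝓝 (a • x)) := hlim.smul_const x
  refine isClosed_nonneg.mem_of_tendsto hlim2 (Eventually.of_forall fun n => ?_)
  exact sfp_dyadic_smul_nonneg hx n _

private lemma sfp_smul_mono {a : ℝ} {y z : E} (ha : 0 ≤ a) (h : y ≤ z) : a • y ≤ a • z := by
  have := sfp_smul_nonneg ha (sub_nonneg.mpr h)
  rwa [smul_sub, sub_nonneg] at this

private lemma sfp_abs_smul_le (a : ℝ) (v : E) : |a • v| ≤ |a| • |v| := by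
  have key : ∀ (b : ℝ), 0 ≤ b → ∀ u : E, |b • u| ≤ b • |u| := by
    intro b hb u
    rw [abs_le']
    refine ⟨sfp_smul_mono hb (le_abs_self u), ?_⟩
    rw [← smul_neg]
    exact sfp_smul_mono hb (neg_le_abs u)
  rcases le_total 0 a with ha | ha
  · rw [abs_of_nonneg ha]; exact key a ha v
  · have : a • v = (-a) • (-v) := by rw [neg_smul_neg]
    rw [this, abs_of_nonpos ha]
    calc |(-a) • (-v)| ≤ (-a) • |(-v)| := key (-a) (by linarith) (-v)
      _ = (-a) • |v| := by rw [abs_neg]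

/-- Truncation estimate. -/
private lemma sfp_clamp (g w : E) : |g - ((g ⊔ (-w)) ⊓ w)| ≤ (|g| - w)⁺ := by
  have e : g - ((g ⊔ (-w)) ⊓ w) = (0 ⊓ (g + w)) ⊔ (g - w) := by
    rw [sub_inf, sub_sup, sub_self, sub_neg_eq_add]
  rw [e, abs_le']
  constructor
  · refine sup_le (le_trans inf_le_left (posPart_nonneg _)) ?_
    exact le_trans (sub_le_sub_right (le_abs_self g) w) (le_posPart _)
  · rw [neg_sup]
    refine le_trans inf_le_left ?_
    rw [neg_inf]
    refine sup_le (by simpa using posPart_nonneg (|g| - w)) ?_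
    refine le_trans ?_ (le_posPart _)
    have h2 : -(g + w) = -g - w := by abel
    rw [h2]
    exact sub_le_sub_right (neg_le_abs g) w

end Aux

set_option maxHeartbeats 1600000 in
private theorem sfp_key
    {E : Type*} [NormedAddCommGroup E] [Lattice E] [HasSolidNorm E] [IsOrderedAddMonoid E] [NormedSpace ℝ E] [CompleteSpace E]
    {S : Type*} [AddCommSemigroup S]
    (T : S → (E →L[ℝ] E))
    (h_pos : ∀ (t : S) (x : E), 0 ≤ x → 0 ≤ T t x)
    (h_sg : ∀ t s : S, T (t + s) = (T t).comp (T s))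
    (h_bdd : ∃ M : ℝ, ∀ t : S, ‖T t‖ ≤ M)
    (h_irr : ∀ I : Submodule ℝ E, IsClosed (I : Set E) →
        (∀ f ∈ I, ∀ g : E, |g| ≤ |f| → g ∈ I) →
        (∀ t : S, ∀ x ∈ I, T t x ∈ I) →
        I = ⊥ ∨ I = ⊤)
    (x : E) (hx : 0 ≤ x) (hsup : ∀ t : S, x ≤ T t x) (t : S) : T t x = x := by
  obtain ⟨M, hM⟩ := h_bdd
  set M' : ℝ := max M 1 with hM'def
  have hM'1 : (1:ℝ) ≤ M' := le_max_right _ _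
  have hM'0 : (0:ℝ) < M' := lt_of_lt_of_le one_pos hM'1
  have hMs : ∀ (s : S) (u : E), ‖T s u‖ ≤ M' * ‖u‖ := fun s u =>
    le_trans ((T s).le_opNorm u)
      (mul_le_mul_of_nonneg_right (le_trans (hM s) (le_max_left _ _)) (norm_nonneg u))
  have h_sg' : ∀ (a b : S) (u : E), T (a + b) u = T a (T b u) := fun a b u => by
    rw [h_sg]; rfl
  have hTmono : ∀ (s : S) {u v : E}, u ≤ v → T s u ≤ T s v := by
    intro s u v huv
    have := h_pos s _ (sub_nonneg.mpr huv)
    rwa [map_sub, sub_nonneg] at this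
  have hTabs : ∀ (s : S) (u : E), |T s u| ≤ T s |u| := by
    intro s u
    rw [abs_le']
    refine ⟨hTmono s (le_abs_self u), ?_⟩
    rw [← map_neg]
    exact hTmono s (neg_le_abs u)
  set A : E →L[ℝ] E := T t with hAdef
  have hpowT : ∀ k : ℕ, ∃ s : S, A ^ (k + 1) = T s := by
    intro k
    induction k with
    | zero => exact ⟨t, by rw [pow_one]⟩
    | succ k ih =>
      obtain ⟨s, hs⟩ := ih
      refine ⟨t + s, ?_⟩
      ext u
      rw [h_sg' t s u, ← hs, pow_succ']
      rfl
  have hApow_norm : ∀ (k : ℕ) (u : E), ‖(A ^ k) u‖ ≤ M' * ‖u‖ := by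
    intro k u
    cases k with
    | zero =>
      rw [pow_zero]
      simpa using le_mul_of_one_le_left (norm_nonneg u) hM'1
    | succ k =>
      obtain ⟨s, hs⟩ := hpowT k
      rw [hs]; exact hMs s u
  have hApos : ∀ (k : ℕ) {u : E}, 0 ≤ u → 0 ≤ (A ^ k) u := by
    intro k
    induction k with
    | zero => intro u hu; simpa using hu
    | succ k ih =>
      intro u hu
      rw [pow_succ', ContinuousLinearMap.mul_apply]
      exact h_pos t _ (ih hu)
  have hAmono : ∀ (k : ℕ) {u v : E}, u ≤ v → (A ^ k) u ≤ (A ^ k) v := by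
    intro k u v huv
    have := hApos k (sub_nonneg.mpr huv)
    rwa [map_sub, sub_nonneg] at this
  have hcomm : ∀ (s : S) (k : ℕ) (u : E), (A ^ k) (T s u) = T s ((A ^ k) u) := by
    intro s k u
    induction k with
    | zero => simp
    | succ k ih =>
      rw [pow_succ', ContinuousLinearMap.mul_apply, ContinuousLinearMap.mul_apply, ih,
        ← h_sg' t s, add_comm t s, h_sg' s t]
  have hxk : ∀ k : ℕ, x ≤ (A ^ k) x := by
    intro k
    induction k with
    | zero => simp
    | succ k ih =>
      rw [pow_succ, ContinuousLinearMap.mul_apply]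
      exact le_trans ih (hAmono k (hsup t))
  set z : E := A x - x with hzdef
  have hz0 : 0 ≤ z := sub_nonneg.mpr (hsup t)
  set Pred : E → Prop :=
    fun w => 0 ≤ w ∧ ∃ C : ℝ, ∀ n : ℕ, ‖∑ k ∈ Finset.range n, (A ^ k) w‖ ≤ C with hPred
  set Ic : Set E :=
    {u | ∀ ε : ℝ, 0 < ε → ∃ v w : E, Pred w ∧ |v| ≤ w ∧ ‖u - v‖ ≤ ε} with hIc
  have hIc_add : ∀ {u₁ u₂ : E}, u₁ ∈ Ic → u₂ ∈ Ic → u₁ + u₂ ∈ Ic := by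
    intro u₁ u₂ h1 h2 ε hε
    obtain ⟨v₁, w₁, ⟨hw₁0, C₁, hC₁⟩, hv₁, hd₁⟩ := h1 (ε/2) (by positivity)
    obtain ⟨v₂, w₂, ⟨hw₂0, C₂, hC₂⟩, hv₂, hd₂⟩ := h2 (ε/2) (by positivity)
    refine ⟨v₁ + v₂, w₁ + w₂, ⟨add_nonneg hw₁0 hw₂0, C₁ + C₂, fun n => ?_⟩, ?_, ?_⟩
    · simp only [map_add, Finset.sum_add_distrib]
      exact le_trans (norm_add_le _ _) (add_le_add (hC₁ n) (hC₂ n))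
    · exact le_trans (abs_add_le _ _) (add_le_add hv₁ hv₂)
    · have e : u₁ + u₂ - (v₁ + v₂) = (u₁ - v₁) + (u₂ - v₂) := by abel
      rw [e]
      calc ‖(u₁ - v₁) + (u₂ - v₂)‖ ≤ ‖u₁ - v₁‖ + ‖u₂ - v₂‖ := norm_add_le _ _
        _ ≤ ε/2 + ε/2 := add_le_add hd₁ hd₂
        _ = ε := by ring
  have hIc_zero : (0 : E) ∈ Ic := by
    intro ε hε
    exact ⟨0, 0, ⟨le_refl 0, 0, fun n => by simp⟩, by simp, by simp [le_of_lt hε]⟩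
  have hIc_smul : ∀ (a : ℝ) {u : E}, u ∈ Ic → a • u ∈ Ic := by
    intro a u hu ε hε
    obtain ⟨v, w, ⟨hw0, C, hC⟩, hv, hd⟩ := hu (ε/(|a|+1)) (by positivity)
    refine ⟨a • v, |a| • w, ⟨sfp_smul_nonneg (abs_nonneg a) hw0, |a| * C, fun n => ?_⟩, ?_, ?_⟩
    · have e : ∑ k ∈ Finset.range n, (A ^ k) (|a| • w)
          = |a| • ∑ k ∈ Finset.range n, (A ^ k) w := by
        rw [Finset.smul_sum]
        exact Finset.sum_congr rfl fun k _ => map_smul _ _ _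
      rw [e, norm_smul, Real.norm_eq_abs, abs_abs]
      exact mul_le_mul_of_nonneg_left (hC n) (abs_nonneg a)
    · exact le_trans (sfp_abs_smul_le a v) (sfp_smul_mono (abs_nonneg a) hv)
    · rw [← smul_sub, norm_smul, Real.norm_eq_abs]
      have h1 : |a| * ‖u - v‖ ≤ |a| * (ε/(|a|+1)) := mul_le_mul_of_nonneg_left hd (abs_nonneg a)
      have h2 : |a| * (ε/(|a|+1)) ≤ ε := by
        rw [mul_div_assoc']
        rw [div_le_iff₀ (by positivity)]
        nlinarith [abs_nonneg a, le_of_lt hε]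
      linarith
  set I : Submodule ℝ E :=
    { carrier := Ic
      add_mem' := hIc_add
      zero_mem' := hIc_zero
      smul_mem' := hIc_smul } with hIdefn
  have hImem : ∀ u : E, u ∈ I ↔ u ∈ Ic := fun u => Iff.rfl
  have hclosed : IsClosed (I : Set E) := by
    apply isClosed_of_closure_subset
    intro u hu ε hε
    obtain ⟨u', hu', hdu⟩ := Metric.mem_closure_iff.mp hu (ε/2) (by positivity)
    obtain ⟨v, w, hP, hv, hd⟩ := hu' (ε/2) (by positivity)
    refine ⟨v, w, hP, hv, ?_⟩
    rw [dist_eq_norm] at hdu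
    have e : u - v = (u - u') + (u' - v) := by abel
    rw [e]
    calc ‖(u - u') + (u' - v)‖ ≤ ‖u - u'‖ + ‖u' - v‖ := norm_add_le _ _
      _ ≤ ε/2 + ε/2 := add_le_add (le_of_lt hdu) hd
      _ = ε := by ring
  have hideal : ∀ f ∈ I, ∀ g : E, |g| ≤ |f| → g ∈ I := by
    intro f hf g hg ε hε
    obtain ⟨v, w, hP, hv, hd⟩ := hf ε hε
    refine ⟨(g ⊔ (-|v|)) ⊓ |v|, w, hP, ?_, ?_⟩
    · refine le_trans ?_ hv
      rw [abs_le']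
      refine ⟨inf_le_right, ?_⟩
      rw [neg_le]
      exact le_inf le_sup_right ((neg_nonpos.mpr (abs_nonneg v)).trans (abs_nonneg v))
    · have h1 : |g - ((g ⊔ (-|v|)) ⊓ |v|)| ≤ (|g| - |v|)⁺ := sfp_clamp g |v|
      have h2 : (|g| - |v|)⁺ ≤ |f - v| := by
        rw [posPart_def]
        refine sup_le ?_ (abs_nonneg _)
        calc |g| - |v| ≤ |f| - |v| := sub_le_sub_right hg _
          _ ≤ |(|f| - |v|)| := le_abs_self _
          _ ≤ |f - v| := abs_abs_sub_abs_le _ _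
      exact le_trans (HasSolidNorm.solid (le_trans h1 h2)) hd
  have hinv : ∀ s : S, ∀ u ∈ I, T s u ∈ I := by
    intro s u hu ε hε
    obtain ⟨v, w, ⟨hw0, C, hC⟩, hv, hd⟩ := hu (ε/M') (div_pos hε hM'0)
    refine ⟨T s v, T s w, ⟨h_pos s w hw0, M' * C, fun n => ?_⟩, ?_, ?_⟩
    · have e : ∑ k ∈ Finset.range n, (A ^ k) (T s w)
          = T s (∑ k ∈ Finset.range n, (A ^ k) w) := by
        rw [map_sum]
        exact Finset.sum_congr rfl fun k _ => hcomm s k w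
      rw [e]
      exact le_trans (hMs s _) (mul_le_mul_of_nonneg_left (hC n) (le_of_lt hM'0))
    · exact le_trans (hTabs s v) (hTmono s hv)
    · rw [← map_sub]
      refine le_trans (hMs s _) ?_
      calc M' * ‖u - v‖ ≤ M' * (ε/M') := mul_le_mul_of_nonneg_left hd (le_of_lt hM'0)
        _ = ε := mul_div_cancel₀ ε (ne_of_gt hM'0)
  have hzI : z ∈ I := by
    intro ε hε
    refine ⟨z, z, ⟨hz0, M' * ‖x‖ + ‖x‖, fun n => ?_⟩, le_of_eq (abs_of_nonneg hz0),
      by simp [le_of_lt hε]⟩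
    have e : ∑ k ∈ Finset.range n, (A ^ k) z = (A ^ n) x - x := by
      have e1 : ∀ k : ℕ, (A ^ k) z = (A ^ (k+1)) x - (A ^ k) x := by
        intro k
        have h7 : (A ^ (k+1)) x = (A ^ k) (A x) := by
          rw [pow_succ, ContinuousLinearMap.mul_apply]
        rw [hzdef, map_sub, h7]
      calc ∑ k ∈ Finset.range n, (A ^ k) z
          = ∑ k ∈ Finset.range n, ((A ^ (k+1)) x - (A ^ k) x) :=
            Finset.sum_congr rfl fun k _ => e1 k
        _ = (A ^ n) x - (A ^ 0) x := Finset.sum_range_sub (fun k => (A ^ k) x) n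
        _ = (A ^ n) x - x := by norm_num
    rw [e]
    exact le_trans (norm_sub_le _ _) (add_le_add (hApow_norm n x) le_rfl)
  rcases h_irr I hclosed hideal hinv with hbot | htop
  · have hz : z = 0 := by
      have := hzI
      rw [hbot] at this
      simpa using this
    rw [hzdef] at hz
    have : A x = x := by rwa [sub_eq_zero] at hz
    exact this
  · have hxI : x ∈ I := htop ▸ Submodule.mem_top
    have hx0 : x = 0 := by
      have hnorm : ∀ ε : ℝ, 0 < ε → ‖x‖ ≤ ε := by
        intro ε hε
        obtain ⟨v, w, ⟨hw0, C, hC⟩, hv, hd⟩ := hxI (ε/(2*M')) (by positivity)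
        have hC0 : 0 ≤ C := by simpa using hC 0
        have hkey : ∀ n : ℕ, (n : ℝ) * ‖x‖ ≤ (n : ℝ) * (M' * (ε/(2*M'))) + C := by
          intro n
          have hxle : x ≤ |x - v| + w := by
            have h3 : |x| - |v| ≤ |x - v| := le_trans (le_abs_self _) (abs_abs_sub_abs_le _ _)
            have h4 : |x| ≤ |x - v| + |v| := sub_le_iff_le_add.mp h3
            calc x = |x| := (abs_of_nonneg hx).symm
              _ ≤ |x - v| + |v| := h4
              _ ≤ |x - v| + w := add_le_add le_rfl hv
          have hchain : n • x ≤
              (∑ k ∈ Finset.range n, (A ^ k) |x - v|) + ∑ k ∈ Finset.range n, (A ^ k) w := by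
            calc n • x = ∑ _k ∈ Finset.range n, x := by
                  simp [Finset.sum_const, Finset.card_range]
              _ ≤ ∑ k ∈ Finset.range n, (A ^ k) x := Finset.sum_le_sum fun k _ => hxk k
              _ ≤ ∑ k ∈ Finset.range n, ((A ^ k) |x - v| + (A ^ k) w) :=
                  Finset.sum_le_sum fun k _ => by
                    rw [← map_add]; exact hAmono k hxle
              _ = _ := Finset.sum_add_distrib
          have hS0 : 0 ≤ ∑ k ∈ Finset.range n, (A ^ k) |x - v| :=
            Finset.sum_nonneg fun k _ => hApos k (abs_nonneg _)
          have hW0 : 0 ≤ ∑ k ∈ Finset.range n, (A ^ k) w :=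
            Finset.sum_nonneg fun k _ => hApos k hw0
          have hn0 : 0 ≤ n • x := nsmul_nonneg hx n
          have hnorm_le : ‖n • x‖ ≤
              ‖(∑ k ∈ Finset.range n, (A ^ k) |x - v|) + ∑ k ∈ Finset.range n, (A ^ k) w‖ :=
            HasSolidNorm.solid
              (by rw [abs_of_nonneg hn0, abs_of_nonneg (add_nonneg hS0 hW0)]; exact hchain)
          have h1 : ‖∑ k ∈ Finset.range n, (A ^ k) |x - v|‖ ≤ (n:ℝ) * (M' * (ε/(2*M'))) := by
            refine le_trans (norm_sum_le _ _) ?_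
            calc ∑ k ∈ Finset.range n, ‖(A ^ k) |x - v|‖
                ≤ ∑ _k ∈ Finset.range n, M' * (ε/(2*M')) := by
                  refine Finset.sum_le_sum fun k _ => ?_
                  refine le_trans (hApow_norm k _) ?_
                  rw [norm_abs_eq_norm]
                  exact mul_le_mul_of_nonneg_left hd (le_of_lt hM'0)
              _ = (n:ℝ) * (M' * (ε/(2*M'))) := by
                  rw [Finset.sum_const, Finset.card_range, nsmul_eq_mul]
          have h2 : ‖n • x‖ = (n:ℝ) * ‖x‖ := by
            rw [← Nat.cast_smul_eq_nsmul ℝ, norm_smul, Real.norm_natCast]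
          have h5 := hC n
          have h6 := norm_add_le (∑ k ∈ Finset.range n, (A ^ k) |x - v|)
            (∑ k ∈ Finset.range n, (A ^ k) w)
          rw [h2] at hnorm_le
          linarith
        have hhalf : M' * (ε/(2*M')) = ε/2 := by
          field_simp
        obtain ⟨n, hn⟩ := exists_nat_gt (C / (ε/2))
        have hn1 : 0 < (n:ℝ) := lt_of_le_of_lt (by positivity) hn
        have hk := hkey n
        rw [hhalf] at hk
        have hC' : C < (n:ℝ) * (ε/2) := by
          rwa [div_lt_iff₀ (by positivity)] at hn
        have hlt : (n:ℝ) * ‖x‖ < (n:ℝ) * ε := by nlinarith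
        exact le_of_lt ((mul_lt_mul_iff_right₀ hn1).mp hlt)
      have h0 : ‖x‖ ≤ 0 := le_of_forall_pos_le_add fun ε hε => by
        simpa using hnorm ε hε
      exact norm_le_zero_iff.mp h0
    rw [hx0, map_zero]


/-- For an irreducible bounded commutative semigroup of positive operators on a
Banach lattice, every super fixed point is a fixed point and the fixed space is a
sublattice. -/
theorem stmt_10
    {E : Type*} [NormedAddCommGroup E] [Lattice E] [HasSolidNorm E] [IsOrderedAddMonoid E] [NormedSpace ℝ E] [CompleteSpace E]
    {S : Type*} [AddCommSemigroup S]
    (T : S → (E →L[ℝ] E))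
    (h_pos : ∀ (t : S) (x : E), 0 ≤ x → 0 ≤ T t x)
    (h_sg : ∀ t s : S, T (t + s) = (T t).comp (T s))
    (h_bdd : ∃ M : ℝ, ∀ t : S, ‖T t‖ ≤ M)
    (h_irr : ∀ I : Submodule ℝ E, IsClosed (I : Set E) →
        (∀ f ∈ I, ∀ g : E, |g| ≤ |f| → g ∈ I) →
        (∀ t : S, ∀ x ∈ I, T t x ∈ I) →
        I = ⊥ ∨ I = ⊤) :
    (∀ x : E, 0 ≤ x → (∀ t : S, x ≤ T t x) → ∀ t : S, T t x = x) ∧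
    (∀ x : E, (∀ t : S, T t x = x) → ∀ t : S, T t |x| = |x|) := by
  have hTmono : ∀ (s : S) {u v : E}, u ≤ v → T s u ≤ T s v := by
    intro s u v huv
    have := h_pos s _ (sub_nonneg.mpr huv)
    rwa [map_sub, sub_nonneg] at this
  constructor
  · intro x hx hs t
    exact sfp_key T h_pos h_sg h_bdd h_irr x hx hs t
  · intro x hfix t
    refine sfp_key T h_pos h_sg h_bdd h_irr |x| (abs_nonneg x) ?_ t
    intro s
    rw [abs_le']
    constructor
    · calc x = T s x := (hfix s).symm
        _ ≤ T s |x| := hTmono s (le_abs_self x)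
    · calc -x = -(T s x) := by rw [hfix s]
        _ = T s (-x) := (map_neg _ _).symm
        _ ≤ T s |x| := hTmono s (by simpa using (le_abs_self (-x)))
end

section
/- Let E be a complex Banach space and let (T_t)_{t∈(0,∞)} be a one-parameter semigroup of bounded linear operators on E with T_{t+s} = T_t ∘ T_s for all t, s > 0 and sup_{t>0} ‖T_t‖ < ∞. Let λ : (0,∞) → ℂ satisfy |λ_t| = 1 for all t > 0, and suppose there exists x ∈ E, x ≠ 0, with T_t x = λ_t x for all t > 0. Then λ is also an eigenvalue of the dual semigroup: there exists a continuous linear functional φ on E with φ ≠ 0 such that φ(T_t y) = λ_t · φ(y) for all y ∈ E and all t > 0. -/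
open Set Finset

namespace Stmt16Aux

variable {E : Type*} [NormedAddCommGroup E] [NormedSpace ℂ E]

/-- The invariant-norm set. -/
noncomputable def NN (T : ℝ → (E →L[ℂ] E)) (y : E) : ℝ :=
  sSup (insert ‖y‖ ((fun t => ‖T t y‖) '' Set.Ioi (0:ℝ)))

theorem NN_bdd {T : ℝ → (E →L[ℂ] E)} {M : ℝ} (hM : ∀ t : ℝ, 0 < t → ‖T t‖ ≤ M) (y : E) :
    BddAbove (insert ‖y‖ ((fun t => ‖T t y‖) '' Set.Ioi (0:ℝ))) := by
  refine ⟨max ‖y‖ (M * ‖y‖), ?_⟩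
  rintro a (rfl | ⟨t, ht, rfl⟩)
  · exact le_max_left _ _
  · exact le_max_of_le_right <| ((T t).le_opNorm y).trans <|
      mul_le_mul_of_nonneg_right (hM t ht) (norm_nonneg y)

theorem norm_le_NN {T : ℝ → (E →L[ℂ] E)} {M : ℝ} (hM : ∀ t : ℝ, 0 < t → ‖T t‖ ≤ M) (y : E) :
    ‖y‖ ≤ NN T y :=
  le_csSup (NN_bdd hM y) (Set.mem_insert _ _)

theorem normT_le_NN {T : ℝ → (E →L[ℂ] E)} {M : ℝ} (hM : ∀ t : ℝ, 0 < t → ‖T t‖ ≤ M)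
    (y : E) {t : ℝ} (ht : 0 < t) : ‖T t y‖ ≤ NN T y :=
  le_csSup (NN_bdd hM y) (Set.mem_insert_of_mem _ ⟨t, ht, rfl⟩)

theorem NN_nonneg {T : ℝ → (E →L[ℂ] E)} {M : ℝ} (hM : ∀ t : ℝ, 0 < t → ‖T t‖ ≤ M) (y : E) :
    0 ≤ NN T y := (norm_nonneg y).trans (norm_le_NN hM y)

theorem NN_le {T : ℝ → (E →L[ℂ] E)} {M : ℝ} (hM : ∀ t : ℝ, 0 < t → ‖T t‖ ≤ M) (y : E) :
    NN T y ≤ max 1 M * ‖y‖ := by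
  refine csSup_le (by simp) ?_
  rintro a (rfl | ⟨t, ht, rfl⟩)
  · calc ‖y‖ = 1 * ‖y‖ := (one_mul _).symm
      _ ≤ max 1 M * ‖y‖ := by gcongr; exact le_max_left _ _
  · exact ((T t).le_opNorm y).trans <| mul_le_mul_of_nonneg_right ((hM t ht).trans (le_max_right _ _)) (norm_nonneg y)

theorem NN_add {T : ℝ → (E →L[ℂ] E)} {M : ℝ} (hM : ∀ t : ℝ, 0 < t → ‖T t‖ ≤ M) (y z : E) :
    NN T (y + z) ≤ NN T y + NN T z := by
  refine csSup_le (by simp) ?_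
  rintro a (rfl | ⟨t, ht, rfl⟩)
  · exact (norm_add_le y z).trans (add_le_add (norm_le_NN hM y) (norm_le_NN hM z))
  · simp only [map_add]
    exact (norm_add_le _ _).trans (add_le_add (normT_le_NN hM y ht) (normT_le_NN hM z ht))

theorem NN_smul_le {T : ℝ → (E →L[ℂ] E)} {M : ℝ} (hM : ∀ t : ℝ, 0 < t → ‖T t‖ ≤ M)
    (c : ℂ) (y : E) : NN T (c • y) ≤ ‖c‖ * NN T y := by
  refine csSup_le (by simp) ?_
  rintro a (rfl | ⟨t, ht, rfl⟩)
  · rw [norm_smul]; exact mul_le_mul_of_nonneg_left (norm_le_NN hM y) (norm_nonneg c)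
  · simp only [map_smul, norm_smul]
    exact mul_le_mul_of_nonneg_left (normT_le_NN hM y ht) (norm_nonneg c)

theorem NN_T_le {T : ℝ → (E →L[ℂ] E)}
    (h_sg : ∀ t s : ℝ, 0 < t → 0 < s → T (t + s) = (T t).comp (T s))
    {M : ℝ} (hM : ∀ t : ℝ, 0 < t → ‖T t‖ ≤ M)
    (y : E) {t : ℝ} (ht : 0 < t) : NN T (T t y) ≤ NN T y := by
  refine csSup_le (by simp) ?_
  rintro a (rfl | ⟨s, hs, rfl⟩)
  · exact normT_le_NN hM y ht
  · show ‖T s (T t y)‖ ≤ NN T y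
    have h1 : T s (T t y) = T (s + t) y := by rw [h_sg s t hs ht]; rfl
    rw [h1]
    exact normT_le_NN hM y (add_pos hs ht)

theorem NN_sum_le {T : ℝ → (E →L[ℂ] E)} {M : ℝ} (hM : ∀ t : ℝ, 0 < t → ‖T t‖ ≤ M)
    {ι : Type*} (s : Finset ι) (f : ι → E) :
    NN T (∑ i ∈ s, f i) ≤ ∑ i ∈ s, NN T (f i) := by
  classical
  induction s using Finset.induction_on with
  | empty =>
    simp only [Finset.sum_empty]
    refine csSup_le (by simp) ?_
    rintro a (rfl | ⟨t, ht, rfl⟩) <;> simp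
  | insert _ _ hi ih =>
    rw [Finset.sum_insert hi, Finset.sum_insert hi]
    exact (NN_add hM _ _).trans (by gcongr)


theorem lam_mul {T : ℝ → (E →L[ℂ] E)}
    (h_sg : ∀ t s : ℝ, 0 < t → 0 < s → T (t + s) = (T t).comp (T s))
    {lam : ℝ → ℂ} {x : E} (hx : x ≠ 0)
    (h_eig : ∀ t : ℝ, 0 < t → T t x = lam t • x)
    {s t : ℝ} (hs : 0 < s) (ht : 0 < t) : lam (s + t) = lam s * lam t := by
  have h1 : lam (s + t) • x = (lam s * lam t) • x := by
    rw [← h_eig _ (add_pos hs ht), h_sg s t hs ht, ContinuousLinearMap.comp_apply,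
      h_eig t ht, map_smul, h_eig s hs, smul_smul, mul_comm]
  have h2 : (lam (s + t) - lam s * lam t) • x = 0 := by
    rw [sub_smul, h1, sub_self]
  rcases smul_eq_zero.mp h2 with h | h
  · exact sub_eq_zero.mp h
  · exact absurd h hx

theorem conj_mul_lam {lam : ℝ → ℂ} (h_uni : ∀ t : ℝ, 0 < t → ‖lam t‖ = 1)
    {t : ℝ} (ht : 0 < t) : (starRingEnd ℂ) (lam t) * lam t = 1 := by
  rw [Complex.conj_mul']
  norm_cast
  rw [h_uni t ht]
  norm_num

/-- Averaging operator. -/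
noncomputable def Aop (T : ℝ → (E →L[ℂ] E)) (lam : ℝ → ℂ) (t : ℝ) (n : ℕ) : E →L[ℂ] E :=
  (n : ℂ)⁻¹ • ∑ k ∈ Finset.range n,
    (starRingEnd ℂ) (lam (((k : ℝ) + 1) * t)) • T (((k : ℝ) + 1) * t)

theorem Aop_apply (T : ℝ → (E →L[ℂ] E)) (lam : ℝ → ℂ) (t : ℝ) (n : ℕ) (y : E) :
    Aop T lam t n y = (n : ℂ)⁻¹ • ∑ k ∈ Finset.range n,
      (starRingEnd ℂ) (lam (((k : ℝ) + 1) * t)) • T (((k : ℝ) + 1) * t) y := by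
  simp [Aop]

theorem Aop_x {T : ℝ → (E →L[ℂ] E)} {lam : ℝ → ℂ}
    (h_uni : ∀ t : ℝ, 0 < t → ‖lam t‖ = 1) {x : E}
    (h_eig : ∀ t : ℝ, 0 < t → T t x = lam t • x)
    {t : ℝ} (ht : 0 < t) {n : ℕ} (hn : 1 ≤ n) : Aop T lam t n x = x := by
  rw [Aop_apply]
  have hterm : ∀ k ∈ Finset.range n,
      (starRingEnd ℂ) (lam (((k : ℝ) + 1) * t)) • T (((k : ℝ) + 1) * t) x = x := by
    intro k _
    have hkt : 0 < ((k : ℝ) + 1) * t := by positivity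
    rw [h_eig _ hkt, smul_smul, conj_mul_lam h_uni hkt, one_smul]
  rw [Finset.sum_congr rfl hterm, Finset.sum_const, Finset.card_range,
    ← Nat.cast_smul_eq_nsmul ℂ, smul_smul, inv_mul_cancel₀ (Nat.cast_ne_zero.mpr (by omega)), one_smul]



theorem NN_Aop_le {T : ℝ → (E →L[ℂ] E)}
    (h_sg : ∀ t s : ℝ, 0 < t → 0 < s → T (t + s) = (T t).comp (T s))
    {M : ℝ} (hM : ∀ t : ℝ, 0 < t → ‖T t‖ ≤ M)
    {lam : ℝ → ℂ} (h_uni : ∀ t : ℝ, 0 < t → ‖lam t‖ = 1)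
    {t : ℝ} (ht : 0 < t) {n : ℕ} (hn : 1 ≤ n) (y : E) :
    NN T (Aop T lam t n y) ≤ NN T y := by
  rw [Aop_apply]
  calc NN T ((n : ℂ)⁻¹ • ∑ k ∈ Finset.range n,
        (starRingEnd ℂ) (lam (((k : ℝ) + 1) * t)) • T (((k : ℝ) + 1) * t) y)
      ≤ ‖(n : ℂ)⁻¹‖ * NN T (∑ k ∈ Finset.range n,
        (starRingEnd ℂ) (lam (((k : ℝ) + 1) * t)) • T (((k : ℝ) + 1) * t) y) :=
        NN_smul_le hM _ _
    _ ≤ ‖(n : ℂ)⁻¹‖ * ∑ k ∈ Finset.range n,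
        NN T ((starRingEnd ℂ) (lam (((k : ℝ) + 1) * t)) • T (((k : ℝ) + 1) * t) y) :=
        mul_le_mul_of_nonneg_left (NN_sum_le hM _ _) (norm_nonneg _)
    _ ≤ ‖(n : ℂ)⁻¹‖ * ∑ _k ∈ Finset.range n, NN T y := by
        refine mul_le_mul_of_nonneg_left (Finset.sum_le_sum fun k hk => ?_) (norm_nonneg _)
        have hkt : (0:ℝ) < ((k : ℝ) + 1) * t := by positivity
        calc NN T ((starRingEnd ℂ) (lam (((k : ℝ) + 1) * t)) • T (((k : ℝ) + 1) * t) y)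
            ≤ ‖(starRingEnd ℂ) (lam (((k : ℝ) + 1) * t))‖ * NN T (T (((k : ℝ) + 1) * t) y) :=
              NN_smul_le hM _ _
          _ ≤ NN T y := by
              rw [RingHomIsometric.norm_map, h_uni _ hkt, one_mul]
              exact NN_T_le h_sg hM y hkt
    _ = NN T y := by
        rw [Finset.sum_const, Finset.card_range, nsmul_eq_mul, ← mul_assoc]
        have hne : ((n:ℕ):ℝ) ≠ 0 := Nat.cast_ne_zero.mpr (by omega)
        rw [norm_inv, Complex.norm_natCast, inv_mul_cancel₀ hne, one_mul]

theorem Aop_T_comm {T : ℝ → (E →L[ℂ] E)}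
    (h_sg : ∀ t s : ℝ, 0 < t → 0 < s → T (t + s) = (T t).comp (T s))
    (lam : ℝ → ℂ) {t s : ℝ} (ht : 0 < t) (hs : 0 < s) (n : ℕ) (y : E) :
    Aop T lam t n (T s y) = T s (Aop T lam t n y) := by
  rw [Aop_apply, Aop_apply, map_smul, map_sum]
  congr 1
  refine Finset.sum_congr rfl fun k _ => ?_
  rw [map_smul]
  congr 1
  have hkt : (0:ℝ) < ((k : ℝ) + 1) * t := by positivity
  have e1 : T (((k : ℝ) + 1) * t) (T s y) = T (((k : ℝ) + 1) * t + s) y := by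
    rw [h_sg _ _ hkt hs]; rfl
  have e2 : T s (T (((k : ℝ) + 1) * t) y) = T (s + ((k : ℝ) + 1) * t) y := by
    rw [h_sg _ _ hs hkt]; rfl
  rw [e1, e2, add_comm]

theorem Aop_Aop_comm {T : ℝ → (E →L[ℂ] E)}
    (h_sg : ∀ t s : ℝ, 0 < t → 0 < s → T (t + s) = (T t).comp (T s))
    (lam : ℝ → ℂ) {t s : ℝ} (ht : 0 < t) (hs : 0 < s) (n m : ℕ) (y : E) :
    Aop T lam t n (Aop T lam s m y) = Aop T lam s m (Aop T lam t n y) := by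
  conv_lhs => rw [Aop_apply T lam s m y]
  rw [map_smul, map_sum, Aop_apply T lam s m]
  congr 1
  refine Finset.sum_congr rfl fun k _ => ?_
  rw [map_smul]
  congr 1
  exact Aop_T_comm h_sg lam ht (by positivity) n y


/-- The orbit function `k ↦ conj (λ_{kt}) • T_{kt} y`. -/
noncomputable def gfun (T : ℝ → (E →L[ℂ] E)) (lam : ℝ → ℂ) (t : ℝ) (y : E) (k : ℕ) : E :=
  (starRingEnd ℂ) (lam ((k : ℝ) * t)) • T ((k : ℝ) * t) y

theorem NN_gfun_le {T : ℝ → (E →L[ℂ] E)}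
    (h_sg : ∀ t s : ℝ, 0 < t → 0 < s → T (t + s) = (T t).comp (T s))
    {M : ℝ} (hM : ∀ t : ℝ, 0 < t → ‖T t‖ ≤ M)
    {lam : ℝ → ℂ} (h_uni : ∀ t : ℝ, 0 < t → ‖lam t‖ = 1)
    {t : ℝ} (ht : 0 < t) (y : E) {k : ℕ} (hk : 1 ≤ k) :
    NN T (gfun T lam t y k) ≤ NN T y := by
  have h1 : (1:ℝ) ≤ (k : ℝ) := by exact_mod_cast hk
  have hkt : (0:ℝ) < (k : ℝ) * t := mul_pos (lt_of_lt_of_le one_pos h1) ht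
  calc NN T (gfun T lam t y k)
      ≤ ‖(starRingEnd ℂ) (lam ((k : ℝ) * t))‖ * NN T (T ((k : ℝ) * t) y) := NN_smul_le hM _ _
    _ ≤ NN T y := by
        rw [RingHomIsometric.norm_map, h_uni _ hkt, one_mul]
        exact NN_T_le h_sg hM y hkt

theorem NN_sub_le {T : ℝ → (E →L[ℂ] E)} {M : ℝ} (hM : ∀ t : ℝ, 0 < t → ‖T t‖ ≤ M) (y z : E) :
    NN T (y - z) ≤ NN T y + NN T z := by
  rw [sub_eq_add_neg]
  refine (NN_add hM _ _).trans (add_le_add_right ?_ _)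
  have : -z = (-1 : ℂ) • z := by simp
  rw [this]
  simpa using NN_smul_le hM (-1 : ℂ) z

theorem Aop_key {T : ℝ → (E →L[ℂ] E)}
    (h_sg : ∀ t s : ℝ, 0 < t → 0 < s → T (t + s) = (T t).comp (T s))
    {M : ℝ} (hM : ∀ t : ℝ, 0 < t → ‖T t‖ ≤ M)
    {lam : ℝ → ℂ} (h_uni : ∀ t : ℝ, 0 < t → ‖lam t‖ = 1)
    {x : E} (hx : x ≠ 0) (h_eig : ∀ t : ℝ, 0 < t → T t x = lam t • x)
    {t : ℝ} (ht : 0 < t) {n : ℕ} (hn : 1 ≤ n) (y : E) :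
    NN T (Aop T lam t n (T t y - lam t • y)) ≤ 2 / n * NN T y := by
  have hA1 : Aop T lam t n (T t y) = (n : ℂ)⁻¹ • ∑ k ∈ Finset.range n,
      lam t • gfun T lam t y (k + 2) := by
    rw [Aop_apply]
    congr 1
    refine Finset.sum_congr rfl fun k _ => ?_
    have hk1 : (0:ℝ) < ((k : ℝ) + 1) * t := by positivity
    have e1 : T (((k : ℝ) + 1) * t) (T t y) = T (((k : ℝ) + 2) * t) y := by
      rw [show ((k : ℝ) + 2) * t = ((k : ℝ) + 1) * t + t by ring, h_sg _ _ hk1 ht]; rfl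
    have e2 : lam (((k : ℝ) + 2) * t) = lam (((k : ℝ) + 1) * t) * lam t := by
      rw [show ((k : ℝ) + 2) * t = ((k : ℝ) + 1) * t + t by ring]
      exact lam_mul h_sg hx h_eig hk1 ht
    have e4 : lam t * (starRingEnd ℂ) (lam (((k : ℝ) + 2) * t))
        = (starRingEnd ℂ) (lam (((k : ℝ) + 1) * t)) := by
      rw [e2, map_mul]
      calc lam t * ((starRingEnd ℂ) (lam (((k:ℝ)+1)*t)) * (starRingEnd ℂ) (lam t))
          = (starRingEnd ℂ) (lam (((k:ℝ)+1)*t)) * ((starRingEnd ℂ) (lam t) * lam t) := by ring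
        _ = _ := by rw [conj_mul_lam h_uni ht, mul_one]
    have e5 : gfun T lam t y (k + 2)
        = (starRingEnd ℂ) (lam (((k : ℝ) + 2) * t)) • T (((k : ℝ) + 2) * t) y := by
      unfold gfun; norm_cast
    rw [e5, smul_smul, e4, e1]
  have hA2 : Aop T lam t n y = (n : ℂ)⁻¹ • ∑ k ∈ Finset.range n, gfun T lam t y (k + 1) := by
    rw [Aop_apply]
    congr 1
    refine Finset.sum_congr rfl fun k _ => ?_
    have e5 : gfun T lam t y (k + 1)
        = (starRingEnd ℂ) (lam (((k : ℝ) + 1) * t)) • T (((k : ℝ) + 1) * t) y := by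
      unfold gfun; norm_cast
    rw [e5]
  have htel : ∑ k ∈ Finset.range n, gfun T lam t y (k + 2)
      = ∑ k ∈ Finset.range n, gfun T lam t y (k + 1)
        + gfun T lam t y (n + 1) - gfun T lam t y 1 := by
    have h1 := Finset.sum_range_succ' (fun k => gfun T lam t y (k + 1)) n
    have h2 := Finset.sum_range_succ (fun k => gfun T lam t y (k + 1)) n
    rw [eq_sub_iff_add_eq, ← h2]
    exact h1.symm
  have hmain : Aop T lam t n (T t y - lam t • y)
      = (n : ℂ)⁻¹ • (lam t • (gfun T lam t y (n + 1) - gfun T lam t y 1)) := by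
    rw [map_sub, map_smul, hA1, hA2, ← Finset.smul_sum, htel,
      smul_comm (lam t) ((n:ℂ)⁻¹), ← smul_sub, ← smul_sub]
    congr 1
    congr 1
    abel
  rw [hmain]
  have hnR : (0:ℝ) < (n : ℝ) := by exact_mod_cast Nat.lt_of_lt_of_le Nat.zero_lt_one hn
  calc NN T ((n : ℂ)⁻¹ • (lam t • (gfun T lam t y (n + 1) - gfun T lam t y 1)))
      ≤ ‖(n : ℂ)⁻¹‖ * NN T (lam t • (gfun T lam t y (n + 1) - gfun T lam t y 1)) :=
        NN_smul_le hM _ _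
    _ ≤ ‖(n : ℂ)⁻¹‖ * (‖lam t‖ * NN T (gfun T lam t y (n + 1) - gfun T lam t y 1)) := by
        exact mul_le_mul_of_nonneg_left (NN_smul_le hM _ _) (norm_nonneg _)
    _ ≤ ‖(n : ℂ)⁻¹‖ * (1 * (NN T y + NN T y)) := by
        refine mul_le_mul_of_nonneg_left ?_ (norm_nonneg _)
        rw [h_uni t ht]
        refine mul_le_mul_of_nonneg_left ?_ one_pos.le
        exact (NN_sub_le hM _ _).trans (add_le_add
          (NN_gfun_le h_sg hM h_uni ht y (by omega))
          (NN_gfun_le h_sg hM h_uni ht y le_rfl))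
    _ = 2 / n * NN T y := by
        rw [norm_inv, Complex.norm_natCast]
        field_simp
        ring


/-- Generators of the monoid of admissible averaging operators. -/
def Sgen (T : ℝ → (E →L[ℂ] E)) (lam : ℝ → ℂ) : Set (E →L[ℂ] E) :=
  {B | ∃ t n, 0 < t ∧ 1 ≤ n ∧ B = Aop T lam t n}

theorem adm_T_comm {T : ℝ → (E →L[ℂ] E)}
    (h_sg : ∀ t s : ℝ, 0 < t → 0 < s → T (t + s) = (T t).comp (T s))
    {lam : ℝ → ℂ} {B : E →L[ℂ] E} (hB : B ∈ Submonoid.closure (Sgen T lam)) :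
    ∀ s : ℝ, 0 < s → ∀ y : E, B (T s y) = T s (B y) := by
  induction hB using Submonoid.closure_induction with
  | mem B hBmem =>
    obtain ⟨t, n, ht, hn, rfl⟩ := hBmem
    exact fun s hs y => Aop_T_comm h_sg lam ht hs n y
  | one => exact fun s hs y => rfl
  | mul B C _ _ ihB ihC =>
    intro s hs y
    rw [ContinuousLinearMap.mul_apply, ContinuousLinearMap.mul_apply, ihC s hs y, ihB s hs (C y)]

theorem adm_x {T : ℝ → (E →L[ℂ] E)} {lam : ℝ → ℂ}
    (h_uni : ∀ t : ℝ, 0 < t → ‖lam t‖ = 1) {x : E}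
    (h_eig : ∀ t : ℝ, 0 < t → T t x = lam t • x)
    {B : E →L[ℂ] E} (hB : B ∈ Submonoid.closure (Sgen T lam)) : B x = x := by
  induction hB using Submonoid.closure_induction with
  | mem B hBmem =>
    obtain ⟨t, n, ht, hn, rfl⟩ := hBmem
    exact Aop_x h_uni h_eig ht hn
  | one => rfl
  | mul B C _ _ ihB ihC => rw [ContinuousLinearMap.mul_apply, ihC, ihB]

theorem adm_NN_le {T : ℝ → (E →L[ℂ] E)}
    (h_sg : ∀ t s : ℝ, 0 < t → 0 < s → T (t + s) = (T t).comp (T s))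
    {M : ℝ} (hM : ∀ t : ℝ, 0 < t → ‖T t‖ ≤ M)
    {lam : ℝ → ℂ} (h_uni : ∀ t : ℝ, 0 < t → ‖lam t‖ = 1)
    {B : E →L[ℂ] E} (hB : B ∈ Submonoid.closure (Sgen T lam)) :
    ∀ y : E, NN T (B y) ≤ NN T y := by
  induction hB using Submonoid.closure_induction with
  | mem B hBmem =>
    obtain ⟨t, n, ht, hn, rfl⟩ := hBmem
    exact fun y => NN_Aop_le h_sg hM h_uni ht hn y
  | one => exact fun y => le_rfl
  | mul B C _ _ ihB ihC =>
    intro y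
    rw [ContinuousLinearMap.mul_apply]
    exact (ihB (C y)).trans (ihC y)

theorem adm_Aop_comm {T : ℝ → (E →L[ℂ] E)}
    (h_sg : ∀ t s : ℝ, 0 < t → 0 < s → T (t + s) = (T t).comp (T s))
    {lam : ℝ → ℂ} {B : E →L[ℂ] E} (hB : B ∈ Submonoid.closure (Sgen T lam)) :
    ∀ t : ℝ, 0 < t → ∀ n : ℕ, ∀ y : E, B (Aop T lam t n y) = Aop T lam t n (B y) := by
  induction hB using Submonoid.closure_induction with
  | mem B hBmem =>
    obtain ⟨s, m, hs, hm, rfl⟩ := hBmem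
    exact fun t ht n y => Aop_Aop_comm h_sg lam hs ht m n y
  | one => exact fun t ht n y => rfl
  | mul B C _ _ ihB ihC =>
    intro t ht n y
    rw [ContinuousLinearMap.mul_apply, ContinuousLinearMap.mul_apply, ihC t ht n y,
      ihB t ht n (C y)]

theorem adm_comm {T : ℝ → (E →L[ℂ] E)}
    (h_sg : ∀ t s : ℝ, 0 < t → 0 < s → T (t + s) = (T t).comp (T s))
    {lam : ℝ → ℂ} {B C : E →L[ℂ] E} (hB : B ∈ Submonoid.closure (Sgen T lam))
    (hC : C ∈ Submonoid.closure (Sgen T lam)) :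
    ∀ y : E, B (C y) = C (B y) := by
  induction hC using Submonoid.closure_induction with
  | mem C hCmem =>
    obtain ⟨t, n, ht, hn, rfl⟩ := hCmem
    exact fun y => adm_Aop_comm h_sg hB t ht n y
  | one => exact fun y => rfl
  | mul C D _ _ ihC ihD =>
    intro y
    rw [ContinuousLinearMap.mul_apply, ContinuousLinearMap.mul_apply, ihC (D y), ihD y]

theorem NN_zero {T : ℝ → (E →L[ℂ] E)} {M : ℝ} (hM : ∀ t : ℝ, 0 < t → ‖T t‖ ≤ M) :
    NN T (0 : E) = 0 :=
  le_antisymm ((NN_le hM 0).trans (by simp)) (NN_nonneg hM 0)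


theorem key_span {T : ℝ → (E →L[ℂ] E)}
    (h_sg : ∀ t s : ℝ, 0 < t → 0 < s → T (t + s) = (T t).comp (T s))
    {M : ℝ} (hM : ∀ t : ℝ, 0 < t → ‖T t‖ ≤ M)
    {lam : ℝ → ℂ} (h_uni : ∀ t : ℝ, 0 < t → ‖lam t‖ = 1)
    {x : E} (hx : x ≠ 0) (h_eig : ∀ t : ℝ, 0 < t → T t x = lam t • x)
    {z : E} (hz : z ∈ Submodule.span ℂ {w : E | ∃ t, 0 < t ∧ ∃ y, w = T t y - lam t • y}) :
    ∀ ε : ℝ, 0 < ε → ∃ B ∈ Submonoid.closure (Sgen T lam),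
      ∀ C ∈ Submonoid.closure (Sgen T lam), NN T (C (B z)) ≤ ε := by
  induction hz using Submodule.span_induction with
  | mem w hw =>
    obtain ⟨t, ht, y0, rfl⟩ := hw
    intro ε hε
    obtain ⟨n0, hn0⟩ := exists_nat_ge (2 * NN T y0 / ε)
    set n : ℕ := max n0 1 with hn
    have hn1 : 1 ≤ n := le_max_right _ _
    have hnpos : (0:ℝ) < (n : ℝ) := by exact_mod_cast Nat.lt_of_lt_of_le Nat.zero_lt_one hn1
    have hbound : 2 / (n : ℝ) * NN T y0 ≤ ε := by
      rw [div_mul_eq_mul_div, div_le_iff₀ hnpos]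
      have h1 : 2 * NN T y0 / ε ≤ (n0 : ℝ) := hn0
      have h2 : (n0 : ℝ) ≤ (n : ℝ) := by exact_mod_cast le_max_left n0 1
      calc 2 * NN T y0 = 2 * NN T y0 / ε * ε := by field_simp
        _ ≤ (n : ℝ) * ε := mul_le_mul_of_nonneg_right (h1.trans h2) hε.le
        _ = ε * (n : ℝ) := mul_comm _ _
    refine ⟨Aop T lam t n, Submonoid.subset_closure ⟨t, n, ht, hn1, rfl⟩, fun C hC => ?_⟩
    have e1 : C (Aop T lam t n (T t y0 - lam t • y0))
        = Aop T lam t n (T t (C y0) - lam t • C y0) := by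
      rw [adm_Aop_comm h_sg hC t ht n, map_sub, map_smul, adm_T_comm h_sg hC t ht y0]
    rw [e1]
    calc NN T (Aop T lam t n (T t (C y0) - lam t • C y0))
        ≤ 2 / (n : ℝ) * NN T (C y0) := Aop_key h_sg hM h_uni hx h_eig ht hn1 (C y0)
      _ ≤ 2 / (n : ℝ) * NN T y0 :=
          mul_le_mul_of_nonneg_left (adm_NN_le h_sg hM h_uni hC y0) (by positivity)
      _ ≤ ε := hbound
  | zero =>
    intro ε hε
    refine ⟨1, one_mem _, fun C hC => ?_⟩
    rw [ContinuousLinearMap.one_apply, map_zero, NN_zero hM]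
    exact hε.le
  | add z1 z2 hz1 hz2 ih1 ih2 =>
    intro ε hε
    obtain ⟨B1, hB1, h1⟩ := ih1 (ε / 2) (by positivity)
    obtain ⟨B2, hB2, h2⟩ := ih2 (ε / 2) (by positivity)
    refine ⟨B1 * B2, mul_mem hB1 hB2, fun C hC => ?_⟩
    have e1 : C ((B1 * B2) (z1 + z2))
        = (C * B2) (B1 z1) + (C * B1) (B2 z2) := by
      rw [ContinuousLinearMap.mul_apply, map_add, map_add, map_add,
        ContinuousLinearMap.mul_apply, ContinuousLinearMap.mul_apply]
      congr 1
      rw [adm_comm h_sg hB1 hB2 z1]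
    rw [e1]
    calc NN T ((C * B2) (B1 z1) + (C * B1) (B2 z2))
        ≤ NN T ((C * B2) (B1 z1)) + NN T ((C * B1) (B2 z2)) := NN_add hM _ _
      _ ≤ ε / 2 + ε / 2 := add_le_add (h1 _ (mul_mem hC hB2)) (h2 _ (mul_mem hC hB1))
      _ = ε := by ring
  | smul a z hzmem ih =>
    intro ε hε
    have hpos : (0:ℝ) < ε / (‖a‖ + 1) := by positivity
    obtain ⟨B, hB, h1⟩ := ih _ hpos
    refine ⟨B, hB, fun C hC => ?_⟩
    rw [map_smul, map_smul]
    calc NN T (a • C (B z)) ≤ ‖a‖ * NN T (C (B z)) := NN_smul_le hM _ _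
      _ ≤ ‖a‖ * (ε / (‖a‖ + 1)) := mul_le_mul_of_nonneg_left (h1 C hC) (norm_nonneg a)
      _ ≤ ε := by
          rw [mul_div_assoc']
          rw [div_le_iff₀ (by positivity)]
          nlinarith [norm_nonneg a, hε.le]

end Stmt16Aux

open Stmt16Aux in
/-- Every unimodular eigenvalue of a bounded one-parameter semigroup on a complex
Banach space is also an eigenvalue of the dual semigroup. -/
theorem stmt_16
    {E : Type*} [NormedAddCommGroup E] [NormedSpace ℂ E] [CompleteSpace E]
    (T : ℝ → (E →L[ℂ] E))
    (h_sg : ∀ t s : ℝ, 0 < t → 0 < s → T (t + s) = (T t).comp (T s))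
    (h_bdd : ∃ M : ℝ, ∀ t : ℝ, 0 < t → ‖T t‖ ≤ M)
    (lam : ℝ → ℂ) (h_uni : ∀ t : ℝ, 0 < t → ‖lam t‖ = 1)
    (x : E) (hx : x ≠ 0)
    (h_eig : ∀ t : ℝ, 0 < t → T t x = lam t • x) :
    ∃ φ : E →L[ℂ] ℂ, φ ≠ 0 ∧
      ∀ t : ℝ, 0 < t → ∀ y : E, φ (T t y) = lam t * φ y := by
  classical
  obtain ⟨M, hM⟩ := h_bdd
  set S : Set E := {w : E | ∃ t, 0 < t ∧ ∃ y, w = T t y - lam t • y} with hS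
  set p : Submodule ℂ E := (Submodule.span ℂ S).topologicalClosure with hp
  have hdist : ∀ z ∈ Submodule.span ℂ S, ‖x‖ ≤ max 1 M * ‖x - z‖ := by
    intro z hz
    have hNx : NN T x ≤ max 1 M * ‖x - z‖ := by
      refine le_of_forall_pos_le_add ?_
      intro ε hε
      obtain ⟨B, hB, hBprop⟩ := key_span h_sg hM h_uni hx h_eig hz ε hε
      have hBx : B x = x := adm_x h_uni h_eig hB
      have h0 : NN T x = NN T (B (x - z) + B z) := by
        rw [← map_add, sub_add_cancel, hBx]
      rw [h0]
      calc NN T (B (x - z) + B z) ≤ NN T (B (x - z)) + NN T (B z) := NN_add hM _ _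
        _ ≤ NN T (x - z) + ε := add_le_add (adm_NN_le h_sg hM h_uni hB _)
            (by simpa using hBprop 1 (one_mem _))
        _ ≤ max 1 M * ‖x - z‖ + ε := add_le_add_left (NN_le hM _) _
    exact (norm_le_NN hM x).trans hNx
  have hMpos : (0:ℝ) < max 1 M := lt_of_lt_of_le one_pos (le_max_left _ _)
  have hxnorm : (0:ℝ) < ‖x‖ := norm_pos_iff.mpr hx
  have hxp : x ∉ p := by
    intro hmem
    have hmem' : x ∈ closure ((Submodule.span ℂ S : Submodule ℂ E) : Set E) := by
      rw [← Submodule.topologicalClosure_coe]; exact hmem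
    rw [Metric.mem_closure_iff] at hmem'
    obtain ⟨z, hz, hdz⟩ := hmem' (‖x‖ / max 1 M) (by positivity)
    have h1 := hdist z hz
    rw [dist_eq_norm] at hdz
    have h2 : ‖x‖ < max 1 M * (‖x‖ / max 1 M) :=
      lt_of_le_of_lt h1 (mul_lt_mul_of_pos_left hdz hMpos)
    rw [mul_div_cancel₀ _ (ne_of_gt hMpos)] at h2
    exact lt_irrefl _ h2
  haveI : IsClosed (p : Set E) := Submodule.isClosed_topologicalClosure _
  have hxq : (Submodule.Quotient.mk x : E ⧸ p) ≠ 0 := by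
    rw [Ne, Submodule.Quotient.mk_eq_zero]; exact hxp
  obtain ⟨g, hg1, hg2⟩ := exists_dual_vector ℂ (Submodule.Quotient.mk x : E ⧸ p) (norm_ne_zero_iff.mpr hxq)
  let mkC : E →L[ℂ] E ⧸ p := LinearMap.mkContinuous p.mkQ 1
    (fun y => by simpa using Submodule.Quotient.norm_mk_le (S := p) y)
  refine ⟨g.comp mkC, ?_, ?_⟩
  · intro hzero
    have h3 : g (Submodule.Quotient.mk x : E ⧸ p) = 0 := by
      have := congrArg (fun ψ : E →L[ℂ] ℂ => ψ x) hzero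
      simpa [mkC] using this
    rw [hg2] at h3
    exact hxq (norm_eq_zero.mp (Complex.ofReal_eq_zero.mp h3))
  · intro t ht y
    have hmemS : T t y - lam t • y ∈ p := by
      refine Submodule.le_topologicalClosure _ (Submodule.subset_span ?_)
      exact ⟨t, ht, y, rfl⟩
    have h4 : (Submodule.Quotient.mk (T t y - lam t • y) : E ⧸ p) = 0 :=
      (Submodule.Quotient.mk_eq_zero p).mpr hmemS
    have h5 : (g.comp mkC) (T t y) - lam t * (g.comp mkC) y = 0 := by
      have : (g.comp mkC) (T t y) - lam t * (g.comp mkC) y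
          = g (Submodule.Quotient.mk (T t y - lam t • y) : E ⧸ p) := by
        simp [mkC, map_sub, map_smul, smul_eq_mul]
      rw [this, h4, map_zero]
    exact sub_eq_zero.mp h5
end
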